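/- arXiv:1204.0639 — 2 statements merged into one kernel-verified Lean document; each statement's English description precedes it below -/
import Mathlib

section
/- Let μ be a nonzero Radon measure on ℝ^d \ {0} arising as the vague limit of n·P(a_n^{-1}X ∈ ·) for some random vector X and sequence a_n ↗ ∞. Then μ is homogeneous: there exists α > 0 such that μ(tB) = t^{-α} μ(B) for all Borel sets B bounded away from the origin and all t > 0. -/
open MeasureTheory Filter Set Topology Pointwise

namespace RegVarProof


/-- In any nontrivial interval we can avoid a countable set. -/
lemma exists_mem_Ioo_notMem (S : Set ℝ) (hS : S.Countable) {a b : ℝ} (hab : a < b) :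
    ∃ u, u ∈ Set.Ioo a b ∧ u ∉ S := by
  by_contra h
  push_neg at h
  have hsub : Set.Ioo a b ⊆ S := fun u hu => h u hu
  have h0 : (volume (Set.Ioo a b)) = 0 := (hS.mono hsub).measure_zero _
  rw [Real.volume_Ioo] at h0
  rw [ENNReal.ofReal_eq_zero] at h0
  linarith

/-- A strictly decreasing sequence avoiding a countable set, tending to `r` from above. -/
lemma exists_seq_anti (S : Set ℝ) (hS : S.Countable) (r : ℝ) :
    ∃ u : ℕ → ℝ, StrictAnti u ∧ (∀ j, u j ∉ S) ∧ (∀ j, r < u j) ∧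
      Tendsto u atTop (𝓝 r) := by
  have hchoice : ∀ j : ℕ, ∃ u, u ∈ Set.Ioo (r + 1/(j+2 : ℝ)) (r + 1/(j+1 : ℝ)) ∧ u ∉ S := by
    intro j
    apply exists_mem_Ioo_notMem S hS
    have h1 : (0:ℝ) < (j:ℝ) + 1 := by positivity
    have h2 : (0:ℝ) < (j:ℝ) + 2 := by positivity
    have : 1/((j:ℝ)+2) < 1/((j:ℝ)+1) := by
      apply one_div_lt_one_div_of_lt h1; linarith
    linarith
  choose u hu huS using hchoice
  refine ⟨u, ?_, huS, ?_, ?_⟩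
  · apply strictAnti_nat_of_succ_lt
    intro j
    have h1 := (hu (j+1)).2
    have h2 := (hu j).1
    have : ((j:ℝ)+1) + 1 = (j:ℝ) + 2 := by ring
    calc u (j+1) < r + 1/(((j:ℝ)+1)+1) := by exact_mod_cast h1
    _ = r + 1/((j:ℝ)+2) := by rw [this]
    _ < u j := h2
  · intro j
    have h2 := (hu j).1
    have : (0:ℝ) < 1/((j:ℝ)+2) := by positivity
    linarith
  · have hup : Tendsto (fun j : ℕ => r + 1/((j:ℝ)+1)) atTop (𝓝 r) := by
      have h := (tendsto_const_nhds (x := r) (f := (atTop : Filter ℕ))).add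
        tendsto_one_div_add_atTop_nhds_zero_nat
      simpa using h
    apply tendsto_of_tendsto_of_tendsto_of_le_of_le (tendsto_const_nhds) hup
    · intro j; exact le_of_lt ((fun j => by
        have := (hu j).1
        have : (0:ℝ) < 1/((j:ℝ)+2) := by positivity
        linarith : ∀ j : ℕ, r < u j) j)
    · intro j; exact le_of_lt (hu j).2

/-- μ of tails goes to zero along ℕ. -/
lemma tendsto_tail {d : ℕ} (μ : Measure (Fin d → ℝ))
    (hfin : ∀ ε : ℝ, 0 < ε → μ {x | ε ≤ ‖x‖} < ⊤) :
    Tendsto (fun N : ℕ => μ {x | (N:ℝ) < ‖x‖}) atTop (𝓝 0) := by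
  have hmeas : ∀ N : ℕ, NullMeasurableSet {x : Fin d → ℝ | (N:ℝ) < ‖x‖} μ := by
    intro N
    exact (measurableSet_lt measurable_const measurable_norm).nullMeasurableSet
  have hanti : Antitone (fun N : ℕ => {x : Fin d → ℝ | (N:ℝ) < ‖x‖}) := by
    intro N M hNM x hx
    simp only [mem_setOf_eq] at *
    exact lt_of_le_of_lt (by exact_mod_cast hNM) hx
  have hfin' : ∃ N : ℕ, μ {x : Fin d → ℝ | (N:ℝ) < ‖x‖} ≠ ⊤ := by
    refine ⟨1, ?_⟩
    refine ne_top_of_le_ne_top (hfin 1 one_pos).ne (measure_mono ?_)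
    intro x hx
    simp only [mem_setOf_eq, Nat.cast_one] at *
    linarith
  have h := tendsto_measure_iInter_atTop hmeas hanti hfin'
  have hempty : (⋂ N : ℕ, {x : Fin d → ℝ | (N:ℝ) < ‖x‖}) = ∅ := by
    ext x
    simp only [mem_iInter, mem_setOf_eq, mem_empty_iff_false, iff_false, not_forall, not_lt]
    obtain ⟨N, hN⟩ := exists_nat_gt ‖x‖
    exact ⟨N, le_of_lt hN⟩
  rw [hempty] at h
  simpa [Function.comp_def] using h

/-- Only countably many spheres have positive measure. -/
lemma countable_bad_spheres {d : ℕ} (μ : Measure (Fin d → ℝ))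
    (hfin : ∀ ε : ℝ, 0 < ε → μ {x | ε ≤ ‖x‖} < ⊤) :
    {s : ℝ | 0 < s ∧ μ {x | ‖x‖ = s} ≠ 0}.Countable := by
  have hk : ∀ k : ℕ, {s : ℝ | 1/(k+1:ℝ) ≤ s ∧ μ {x | ‖x‖ = s} ≠ 0}.Countable := by
    intro k
    set As : ℝ → Set (Fin d → ℝ) := fun s => {x | ‖x‖ = s} ∩ {x | 1/(k+1:ℝ) ≤ ‖x‖} with hAs
    have hmble : ∀ s, MeasurableSet (As s) :=
      fun s => (measurable_norm (measurableSet_singleton s)).inter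
        (measurableSet_le measurable_const measurable_norm)
    have hdisj : Pairwise (Function.onFun Disjoint As) := by
      intro s s' hss'
      refine Set.disjoint_left.2 fun x hx hx' => hss' ?_
      exact hx.1.symm.trans hx'.1
    have hunion : μ (⋃ s, As s) ≠ ⊤ := by
      refine ne_top_of_le_ne_top (hfin (1/(k+1:ℝ)) (by positivity)).ne (measure_mono ?_)
      intro x hx
      simp only [mem_iUnion] at hx
      obtain ⟨s, hs⟩ := hx
      exact hs.2
    have := Measure.countable_meas_pos_of_disjoint_of_meas_iUnion_ne_top μ hmble hdisj hunion
    refine this.mono ?_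
    rintro s ⟨hs1, hs2⟩
    have heq : As s = {x | ‖x‖ = s} := by
      apply inter_eq_left.2
      intro x hx
      simp only [mem_setOf_eq] at *
      rw [hx]; exact hs1
    simp only [mem_setOf_eq, heq]
    exact pos_iff_ne_zero.2 hs2
  have : {s : ℝ | 0 < s ∧ μ {x | ‖x‖ = s} ≠ 0} ⊆
      ⋃ k : ℕ, {s : ℝ | 1/(k+1:ℝ) ≤ s ∧ μ {x | ‖x‖ = s} ≠ 0} := by
    rintro s ⟨hs1, hs2⟩
    obtain ⟨k, hk'⟩ := exists_nat_one_div_lt hs1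
    exact mem_iUnion.2 ⟨k, le_of_lt (by exact_mod_cast hk'), hs2⟩
  exact (countable_iUnion hk).mono this



variable {d : ℕ}

/-- A "good cone": open, scaling-invariant, with μ-null frontier away from the origin. -/
def ConeGood (μ : Measure (Fin d → ℝ)) (C : Set (Fin d → ℝ)) : Prop :=
  IsOpen C ∧ (∀ u : ℝ, 0 < u → u • C = C) ∧
    ∀ δ : ℝ, 0 < δ → μ (frontier C ∩ {x | δ ≤ ‖x‖}) = 0

lemma norm_inv_smul {u : ℝ} (hu : 0 < u) (x : Fin d → ℝ) : ‖u⁻¹ • x‖ = u⁻¹ * ‖x‖ := by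
  rw [norm_smul, Real.norm_eq_abs, abs_of_pos (inv_pos.2 hu)]

lemma smul_norm_set {c r : ℝ} (hc : 0 < c) :
    c • {x : Fin d → ℝ | r < ‖x‖} = {x | c * r < ‖x‖} := by
  ext x
  rw [Set.mem_smul_set_iff_inv_smul_mem₀ (ne_of_gt hc)]
  simp only [mem_setOf_eq, norm_inv_smul hc]
  rw [lt_inv_mul_iff₀ hc]

lemma coneGood_inter {μ : Measure (Fin d → ℝ)} {C C' : Set (Fin d → ℝ)}
    (h : ConeGood μ C) (h' : ConeGood μ C') : ConeGood μ (C ∩ C') := by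
  refine ⟨h.1.inter h'.1, fun u hu => ?_, fun δ hδ => ?_⟩
  · rw [Set.smul_set_inter₀ (ne_of_gt hu), h.2.1 u hu, h'.2.1 u hu]
  · have hsub : frontier (C ∩ C') ∩ {x | δ ≤ ‖x‖} ⊆
        (frontier C ∩ {x | δ ≤ ‖x‖}) ∪ (frontier C' ∩ {x | δ ≤ ‖x‖}) := by
      intro x hx
      rcases (frontier_inter_subset C C') hx.1 with h1 | h1
      · exact Or.inl ⟨h1.1, hx.2⟩
      · exact Or.inr ⟨h1.2, hx.2⟩
    refine le_antisymm ?_ (zero_le)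
    calc μ _ ≤ μ ((frontier C ∩ {x | δ ≤ ‖x‖}) ∪ (frontier C' ∩ {x | δ ≤ ‖x‖})) :=
          measure_mono hsub
    _ ≤ μ (frontier C ∩ {x | δ ≤ ‖x‖}) + μ (frontier C' ∩ {x | δ ≤ ‖x‖}) := measure_union_le _ _
    _ = 0 := by rw [h.2.2 δ hδ, h'.2.2 δ hδ, add_zero]

lemma coneGood_univ (μ : Measure (Fin d → ℝ)) : ConeGood μ {x : Fin d → ℝ | x ≠ 0} := by
  refine ⟨?_, fun u hu => ?_, fun δ hδ => ?_⟩
  · have : {x : Fin d → ℝ | x ≠ 0} = ({0} : Set (Fin d → ℝ))ᶜ := by ext x; simp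
    rw [this]; exact isClosed_singleton.isOpen_compl
  · ext x
    rw [Set.mem_smul_set_iff_inv_smul_mem₀ (ne_of_gt hu)]
    simp only [mem_setOf_eq]
    rw [smul_ne_zero_iff]
    simp [inv_ne_zero (ne_of_gt hu)]
  · have h1 : {x : Fin d → ℝ | x ≠ 0} = ({0} : Set (Fin d → ℝ))ᶜ := by ext x; simp
    have hsub : frontier {x : Fin d → ℝ | x ≠ 0} ∩ {x | δ ≤ ‖x‖} ⊆ (∅ : Set (Fin d → ℝ)) := by
      intro x hx
      have h2 : x ∈ ({0} : Set (Fin d → ℝ)) := by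
        have := hx.1
        rw [h1, frontier_compl] at this
        exact isClosed_singleton.frontier_subset this
      have h3 := hx.2
      simp only [mem_singleton_iff] at h2
      subst h2
      simp only [mem_setOf_eq, norm_zero] at h3
      linarith
    exact measure_mono_null hsub (measure_empty)

lemma inter_norm_eq {r : ℝ} (hr : 0 < r) :
    {x : Fin d → ℝ | x ≠ 0} ∩ {x | r < ‖x‖} = {x | r < ‖x‖} := by
  apply inter_eq_right.2
  intro x hx
  simp only [mem_setOf_eq] at *
  intro h
  rw [h, norm_zero] at hx
  linarith

/-- The basic coordinate half-cones. -/
def Kset (i : Fin d) (c : ℝ) : Set (Fin d → ℝ) := {x | x ≠ 0 ∧ x i < c * ‖x‖}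

lemma coneGood_Kset {μ : Measure (Fin d → ℝ)} (i : Fin d) (c : ℝ)
    (hc : ∀ k : ℕ, μ ({x | x i = c * ‖x‖} ∩ {x | 1/(k+1:ℝ) ≤ ‖x‖}) = 0) :
    ConeGood μ (Kset i c) := by
  have hopen : IsOpen (Kset i c) := by
    have h1 : Kset i c = {x : Fin d → ℝ | x ≠ 0} ∩ {x | x i < c * ‖x‖} := rfl
    rw [h1]
    refine IsOpen.inter ?_ (isOpen_lt (continuous_apply i) (continuous_const.mul continuous_norm))
    have : {x : Fin d → ℝ | x ≠ 0} = ({0} : Set (Fin d → ℝ))ᶜ := by ext x; simp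
    rw [this]; exact isClosed_singleton.isOpen_compl
  refine ⟨hopen, fun u hu => ?_, fun δ hδ => ?_⟩
  · ext x
    rw [Set.mem_smul_set_iff_inv_smul_mem₀ (ne_of_gt hu)]
    simp only [Kset, mem_setOf_eq, Pi.smul_apply, smul_eq_mul, norm_inv_smul hu]
    constructor
    · rintro ⟨h1, h2⟩
      refine ⟨fun h => h1 (by rw [h, smul_zero]), ?_⟩
      have hu' : (0:ℝ) < u⁻¹ := inv_pos.2 hu
      rw [show c * (u⁻¹ * ‖x‖) = u⁻¹ * (c * ‖x‖) by ring] at h2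
      exact (mul_lt_mul_iff_right₀ hu').1 h2
    · rintro ⟨h1, h2⟩
      refine ⟨fun h => h1 ?_, ?_⟩
      · have := congrArg (fun y => u • y) h
        simpa [smul_smul, mul_inv_cancel₀ (ne_of_gt hu)] using this
      · have hu' : (0:ℝ) < u⁻¹ := inv_pos.2 hu
        rw [show c * (u⁻¹ * ‖x‖) = u⁻¹ * (c * ‖x‖) by ring]
        exact (mul_lt_mul_iff_right₀ hu').2 h2
  · obtain ⟨k, hk⟩ := exists_nat_one_div_lt hδ
    refine measure_mono_null ?_ (hc k)
    intro x hx
    have hfr := hx.1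
    have hδx : δ ≤ ‖x‖ := hx.2
    have hxne : x ≠ 0 := by
      intro h
      rw [h, norm_zero] at hδx
      linarith
    have hcl : x ∈ closure (Kset i c) := frontier_subset_closure hfr
    have hle : x i ≤ c * ‖x‖ := by
      have hsub : closure (Kset i c) ⊆ {y : Fin d → ℝ | y i ≤ c * ‖y‖} := by
        apply closure_minimal
        · intro y hy; exact le_of_lt hy.2
        · exact isClosed_le (continuous_apply i) (continuous_const.mul continuous_norm)
      exact hsub hcl
    have hnotmem : x ∉ Kset i c := by
      intro hmem
      exact hfr.2 (by rwa [hopen.interior_eq])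
    have heq : x i = c * ‖x‖ := by
      rcases lt_or_eq_of_le hle with h | h
      · exact absurd ⟨hxne, h⟩ hnotmem
      · exact h
    exact ⟨heq, le_trans (le_of_lt hk) hδx⟩


def BadCone (μ : Measure (Fin d → ℝ)) (i : Fin d) : Set ℝ :=
  {c | ∃ k : ℕ, μ ({x | x i = c * ‖x‖} ∩ {x | 1/(k+1:ℝ) ≤ ‖x‖}) ≠ 0}

lemma countable_badCone (μ : Measure (Fin d → ℝ))
    (hfin : ∀ ε : ℝ, 0 < ε → μ {x | ε ≤ ‖x‖} < ⊤) (i : Fin d) :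
    (BadCone μ i).Countable := by
  have hk : ∀ k : ℕ, {c : ℝ | μ ({x | x i = c * ‖x‖} ∩ {x | 1/(k+1:ℝ) ≤ ‖x‖}) ≠ 0}.Countable := by
    intro k
    set As : ℝ → Set (Fin d → ℝ) :=
      fun c => {x | x i = c * ‖x‖} ∩ {x | 1/(k+1:ℝ) ≤ ‖x‖} with hAs
    have hmble : ∀ c, MeasurableSet (As c) := by
      intro c
      exact (measurableSet_eq_fun (measurable_pi_apply i)
        (measurable_const.mul measurable_norm)).inter
        (measurableSet_le measurable_const measurable_norm)
    have hdisj : Pairwise (Function.onFun Disjoint As) := by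
      intro c c' hcc'
      refine Set.disjoint_left.2 fun x hx hx' => hcc' ?_
      obtain ⟨hxa, hxb⟩ := hx
      obtain ⟨hxa', _⟩ := hx'
      simp only [mem_setOf_eq] at hxa hxa' hxb
      have hnorm : ‖x‖ ≠ 0 := by
        have h1k : (0:ℝ) < 1/(k+1:ℝ) := by positivity
        intro h; rw [h] at hxb; linarith
      exact mul_right_cancel₀ hnorm (by rw [← hxa, hxa'])
    have hunion : μ (⋃ c, As c) ≠ ⊤ := by
      refine ne_top_of_le_ne_top (hfin (1/(k+1:ℝ)) (by positivity)).ne (measure_mono ?_)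
      intro x hx
      simp only [mem_iUnion] at hx
      obtain ⟨c, hc⟩ := hx
      exact hc.2
    have := Measure.countable_meas_pos_of_disjoint_of_meas_iUnion_ne_top μ hmble hdisj hunion
    refine this.mono ?_
    intro c hc
    exact pos_iff_ne_zero.2 hc
  have : BadCone μ i ⊆ ⋃ k : ℕ, {c : ℝ | μ ({x | x i = c * ‖x‖} ∩ {x | 1/(k+1:ℝ) ≤ ‖x‖}) ≠ 0} := by
    rintro c ⟨k, hk'⟩
    exact mem_iUnion.2 ⟨k, hk'⟩
  exact (countable_iUnion hk).mono this


def Pis (μ : Measure (Fin d → ℝ)) : Set (Set (Fin d → ℝ)) :=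
  {B | ∃ C, ConeGood μ C ∧ ∃ r : ℝ, 0 < r ∧ B = C ∩ {x | r < ‖x‖}}

lemma isPiSystem_Pis (μ : Measure (Fin d → ℝ)) : IsPiSystem (Pis μ) := by
  rintro B ⟨C, hC, r, hr, rfl⟩ B' ⟨C', hC', r', hr', rfl⟩ _
  refine ⟨C ∩ C', coneGood_inter hC hC', max r r', lt_max_of_lt_left hr, ?_⟩
  ext x
  simp only [mem_inter_iff, mem_setOf_eq, max_lt_iff]
  tauto

lemma gen_eq (μ : Measure (Fin d → ℝ)) (hfin : ∀ ε : ℝ, 0 < ε → μ {x | ε ≤ ‖x‖} < ⊤) :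
    (inferInstance : MeasurableSpace (Fin d → ℝ)) = MeasurableSpace.generateFrom (Pis μ) := by
  have hmeasPis : ∀ B ∈ Pis μ, MeasurableSet B := by
    rintro B ⟨C, hC, r, hr, rfl⟩
    exact (hC.1.measurableSet).inter (measurableSet_lt measurable_const measurable_norm)
  set m := MeasurableSpace.generateFrom (Pis μ) with hm
  have hnorm_set : ∀ r : ℝ, 0 < r → MeasurableSet[m] {x : Fin d → ℝ | r < ‖x‖} := by
    intro r hr
    have h1 : {x : Fin d → ℝ | r < ‖x‖} = {x : Fin d → ℝ | x ≠ 0} ∩ {x | r < ‖x‖} :=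
      (inter_norm_eq hr).symm
    rw [h1]
    exact MeasurableSpace.measurableSet_generateFrom ⟨_, coneGood_univ μ, r, hr, rfl⟩
  have hne : MeasurableSet[m] {x : Fin d → ℝ | x ≠ 0} := by
    have h1 : {x : Fin d → ℝ | x ≠ 0} = ⋃ k : ℕ, {x : Fin d → ℝ | 1/(k+1:ℝ) < ‖x‖} := by
      ext x
      simp only [mem_setOf_eq, mem_iUnion]
      constructor
      · intro hx
        exact exists_nat_one_div_lt (norm_pos_iff.2 hx)
      · rintro ⟨k, hk⟩
        intro h
        rw [h, norm_zero] at hk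
        have : (0:ℝ) < 1/(k+1:ℝ) := by positivity
        linarith
    rw [h1]
    exact MeasurableSet.iUnion fun k => hnorm_set _ (by positivity)
  have h0 : MeasurableSet[m] ({0} : Set (Fin d → ℝ)) := by
    have h1 : ({0} : Set (Fin d → ℝ)) = {x : Fin d → ℝ | x ≠ 0}ᶜ := by ext x; simp
    rw [h1]; exact hne.compl
  have hnorm : Measurable[m] (fun x : Fin d → ℝ => ‖x‖) := by
    apply measurable_of_Ioi
    intro y
    rcases lt_trichotomy y 0 with hy | hy | hy
    · have h1 : (fun x : Fin d → ℝ => ‖x‖) ⁻¹' Set.Ioi y = univ := by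
        ext x; simp only [mem_preimage, mem_Ioi, mem_univ, iff_true]
        linarith [norm_nonneg x]
      rw [h1]; exact MeasurableSet.univ
    · subst hy
      have h1 : (fun x : Fin d → ℝ => ‖x‖) ⁻¹' Set.Ioi 0 = {x : Fin d → ℝ | x ≠ 0} := by
        ext x; simp [norm_pos_iff]
      rw [h1]; exact hne
    · exact hnorm_set y hy
  have hK : ∀ (i : Fin d) (c : ℝ), c ∉ BadCone μ i → MeasurableSet[m] (Kset i c) := by
    intro i c hc
    have hcg : ConeGood μ (Kset i c) := coneGood_Kset i c (by
      intro k; by_contra h; exact hc ⟨k, h⟩)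
    have h1 : Kset i c = ⋃ k : ℕ, (Kset i c ∩ {x | 1/(k+1:ℝ) < ‖x‖}) := by
      ext x
      simp only [mem_iUnion, mem_inter_iff]
      constructor
      · intro hx
        obtain ⟨k, hk⟩ := exists_nat_one_div_lt (norm_pos_iff.2 hx.1)
        exact ⟨k, hx, hk⟩
      · rintro ⟨k, hx, _⟩; exact hx
    rw [h1]
    exact MeasurableSet.iUnion fun k =>
      MeasurableSpace.measurableSet_generateFrom ⟨_, hcg, _, by positivity, rfl⟩
  have hcoord : ∀ i : Fin d, Measurable[m] (fun x : Fin d → ℝ => x i) := by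
    intro i
    classical
    set f : (Fin d → ℝ) → ℝ := fun x => if x = 0 then 0 else x i / ‖x‖ with hf
    have hgoodIio : ∀ c : ℝ, c ∉ BadCone μ i → MeasurableSet[m] (f ⁻¹' Set.Iio c) := by
      intro c hc
      have h1 : f ⁻¹' Set.Iio c = Kset i c ∪ (if 0 < c then ({0} : Set (Fin d → ℝ)) else ∅) := by
        ext x
        simp only [mem_preimage, mem_Iio, hf, mem_union, Kset, mem_setOf_eq]
        by_cases hx : x = 0
        · subst hx
          simp only [if_pos rfl]
          by_cases hc0 : 0 < c
          · simp [hc0]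
          · simp [hc0]
        · rw [if_neg hx]
          have hnx : 0 < ‖x‖ := norm_pos_iff.2 hx
          rw [div_lt_iff₀ hnx]
          constructor
          · intro h
            exact Or.inl ⟨hx, by linarith [mul_comm c ‖x‖ ▸ h]⟩
          · rintro (⟨_, h⟩ | h)
            · linarith [mul_comm c ‖x‖ ▸ h]
            · exfalso
              rcases lt_or_ge 0 c with hc0 | hc0
              · rw [if_pos hc0] at h
                exact hx (by simpa using h)
              · rw [if_neg (not_lt.2 hc0)] at h
                simp at h
      rw [h1]
      refine (hK i c hc).union ?_
      by_cases hc0 : 0 < c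
      · simp only [if_pos hc0]; exact h0
      · simp only [if_neg hc0]; exact MeasurableSet.empty
    have hIio : ∀ y : ℝ, MeasurableSet[m] (f ⁻¹' Set.Iio y) := by
      intro y
      have hch : ∀ j : ℕ, ∃ c, c ∈ Set.Ioo (y - 1/(j+1:ℝ)) y ∧ c ∉ BadCone μ i := by
        intro j
        apply exists_mem_Ioo_notMem _ (countable_badCone μ hfin i)
        have : (0:ℝ) < 1/(j+1:ℝ) := by positivity
        linarith
      choose u hu huB using hch
      have h1 : f ⁻¹' Set.Iio y = ⋃ j : ℕ, f ⁻¹' Set.Iio (u j) := by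
        ext x
        simp only [mem_preimage, mem_Iio, mem_iUnion]
        constructor
        · intro hx
          obtain ⟨j, hj⟩ := exists_nat_one_div_lt (sub_pos.2 hx)
          refine ⟨j, ?_⟩
          have := (hu j).1
          linarith
        · rintro ⟨j, hj⟩
          exact lt_trans hj (hu j).2
      rw [h1]
      exact MeasurableSet.iUnion fun j => hgoodIio (u j) (huB j)
    have hfmeas : Measurable[m] f := measurable_of_Iio hIio
    have heq : (fun x : Fin d → ℝ => x i) = fun x => f x * ‖x‖ := by
      funext x
      by_cases hx : x = 0
      · subst hx; simp [hf]
      · simp only [hf, if_neg hx]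
        rw [div_mul_cancel₀]
        exact norm_ne_zero_iff.2 hx
    rw [heq]
    exact hfmeas.mul hnorm
  refine le_antisymm ?_ (MeasurableSpace.generateFrom_le hmeasPis)
  have hid : @Measurable (Fin d → ℝ) (Fin d → ℝ) m MeasurableSpace.pi (fun x => x) :=
    measurable_pi_iff.mpr hcoord
  intro s hs
  have hs' : MeasurableSet[MeasurableSpace.pi] s := hs
  have := hid hs'
  simpa using this

lemma smul_cone_inter {μ : Measure (Fin d → ℝ)} {C : Set (Fin d → ℝ)} (hC : ConeGood μ C)
    {β r : ℝ} (hβ : 0 < β) :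
    β • (C ∩ {x | r < ‖x‖}) = C ∩ {x | β * r < ‖x‖} := by
  rw [Set.smul_set_inter₀ (ne_of_gt hβ), hC.2.1 β hβ, smul_norm_set hβ]

lemma ext_from_cones (μ : Measure (Fin d → ℝ))
    (hfin : ∀ ε : ℝ, 0 < ε → μ {x | ε ≤ ‖x‖} < ⊤)
    {β : ℝ} (hβ : 0 < β) {τ : ENNReal} (hτ : τ ≠ ⊤)
    (hcone : ∀ C, ConeGood μ C → ∀ r : ℝ, 0 < r →
      μ (C ∩ {x | β * r < ‖x‖}) = τ * μ (C ∩ {x | r < ‖x‖}))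
    (B : Set (Fin d → ℝ)) (hB : MeasurableSet B) (hBa : ∃ ε > (0:ℝ), ∀ x ∈ B, ε ≤ ‖x‖) :
    μ (β • B) = τ * μ B := by
  obtain ⟨ε, hε, hεB⟩ := hBa
  set δ := ε/2 with hδdef
  have hδ : 0 < δ := by positivity
  set Sδ : Set (Fin d → ℝ) := {x | δ < ‖x‖} with hSδ
  have hSδmeas : MeasurableSet Sδ := measurableSet_lt measurable_const measurable_norm
  have hsmulmeas : Measurable (fun x : Fin d → ℝ => β⁻¹ • x) :=
    (continuous_const_smul _).measurable
  have hmap : ∀ A : Set (Fin d → ℝ), MeasurableSet A →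
      (Measure.map (fun x : Fin d → ℝ => β⁻¹ • x) μ) A = μ (β • A) := by
    intro A hA
    rw [Measure.map_apply hsmulmeas hA]
    congr 1
    ext x
    rw [mem_preimage, Set.mem_smul_set_iff_inv_smul_mem₀ (ne_of_gt hβ)]
  have hnormfin : ∀ r : ℝ, 0 < r → μ {x : Fin d → ℝ | r < ‖x‖} ≠ ⊤ := by
    intro r hr
    refine ne_top_of_le_ne_top (hfin r hr).ne (measure_mono ?_)
    intro x hx
    simp only [mem_setOf_eq] at *
    linarith
  set ν₁ := (Measure.map (fun x : Fin d → ℝ => β⁻¹ • x) μ).restrict Sδ with hν₁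
  set ν₂ := (τ • μ).restrict Sδ with hν₂
  have hsmulSδ : β • Sδ = {x : Fin d → ℝ | β * δ < ‖x‖} := smul_norm_set hβ
  haveI : IsFiniteMeasure ν₁ := by
    constructor
    rw [hν₁, Measure.restrict_apply_univ, hmap Sδ hSδmeas, hsmulSδ]
    exact lt_top_iff_ne_top.2 (hnormfin _ (by positivity))
  haveI : IsFiniteMeasure ν₂ := by
    constructor
    rw [hν₂, Measure.restrict_apply_univ, Measure.smul_apply, smul_eq_mul]
    exact ENNReal.mul_lt_top hτ.lt_top (lt_top_iff_ne_top.2 (hnormfin δ hδ))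
  have hagree : ν₁ = ν₂ := by
    refine ext_of_generate_finite (Pis μ) (gen_eq μ hfin) (isPiSystem_Pis μ) ?_ ?_
    · rintro s ⟨C, hC, r, hr, rfl⟩
      have hsm : MeasurableSet (C ∩ {x : Fin d → ℝ | r < ‖x‖}) :=
        (hC.1.measurableSet).inter (measurableSet_lt measurable_const measurable_norm)
      set r' := max r δ with hr'def
      have hr' : 0 < r' := lt_max_of_lt_left hr
      have hinter : (C ∩ {x : Fin d → ℝ | r < ‖x‖}) ∩ Sδ = C ∩ {x | r' < ‖x‖} := by
        ext x
        simp only [mem_inter_iff, mem_setOf_eq, hSδ, hr'def, max_lt_iff]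
        tauto
      have hsm' : MeasurableSet (C ∩ {x : Fin d → ℝ | r' < ‖x‖}) :=
        (hC.1.measurableSet).inter (measurableSet_lt measurable_const measurable_norm)
      rw [hν₁, hν₂, Measure.restrict_apply hsm, Measure.restrict_apply hsm, hinter,
        hmap _ hsm', smul_cone_inter hC hβ, hcone C hC r' hr', Measure.smul_apply, smul_eq_mul]
    · rw [hν₁, hν₂, Measure.restrict_apply_univ, Measure.restrict_apply_univ,
        hmap Sδ hSδmeas, hsmulSδ, Measure.smul_apply, smul_eq_mul]
      have h1 : {x : Fin d → ℝ | β * δ < ‖x‖} = {x : Fin d → ℝ | x ≠ 0} ∩ {x | β*δ < ‖x‖} :=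
        (inter_norm_eq (by positivity)).symm
      have h2 : Sδ = {x : Fin d → ℝ | x ≠ 0} ∩ {x | δ < ‖x‖} := (inter_norm_eq hδ).symm
      rw [h1, h2]
      exact hcone _ (coneGood_univ μ) δ hδ
  have hBsub : B ∩ Sδ = B := by
    apply inter_eq_left.2
    intro x hx
    have := hεB x hx
    simp only [hSδ, mem_setOf_eq, hδdef]
    linarith
  have e1 : ν₁ B = μ (β • B) := by
    rw [hν₁, Measure.restrict_apply hB, hBsub, hmap B hB]
  have e2 : ν₂ B = τ * μ B := by
    rw [hν₂, Measure.restrict_apply hB, hBsub, Measure.smul_apply, smul_eq_mul]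
  rw [← e1, hagree, e2]

lemma no_fixed_scale (μ : Measure (Fin d → ℝ))
    (hfin : ∀ ε : ℝ, 0 < ε → μ {x | ε ≤ ‖x‖} < ⊤)
    {s₀ : ℝ} (hs₀ : 0 < s₀) (hs₀pos : μ {x | s₀ < ‖x‖} ≠ 0) {ρ : ℝ} (hρ : 1 < ρ)
    (hstep : ∀ B : Set (Fin d → ℝ), MeasurableSet B → (∃ ε > (0:ℝ), ∀ x ∈ B, ε ≤ ‖x‖) →
      μ (ρ • B) = μ B) : False := by
  have hρ0 : (0:ℝ) < ρ := lt_trans one_pos hρ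
  have hiter : ∀ k : ℕ, μ {x : Fin d → ℝ | ρ^k * s₀ < ‖x‖} = μ {x | s₀ < ‖x‖} := by
    intro k
    induction k with
    | zero => simp
    | succ k ih =>
      have hset : {x : Fin d → ℝ | ρ^(k+1) * s₀ < ‖x‖} = ρ • {x | ρ^k * s₀ < ‖x‖} := by
        rw [smul_norm_set hρ0]
        have : ρ * (ρ^k * s₀) = ρ^(k+1) * s₀ := by ring
        rw [this]
      have hpos : (0:ℝ) < ρ^k * s₀ := by positivity
      rw [hset, hstep _ (measurableSet_lt measurable_const measurable_norm)
        ⟨ρ^k * s₀, hpos, fun x hx => le_of_lt hx⟩, ih]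
  have htail := tendsto_tail μ hfin
  have hle : ∀ N : ℕ, μ {x : Fin d → ℝ | s₀ < ‖x‖} ≤ μ {x | (N:ℝ) < ‖x‖} := by
    intro N
    obtain ⟨k, hk⟩ : ∃ k : ℕ, (N:ℝ) ≤ ρ^k * s₀ := by
      obtain ⟨k, hk⟩ := ((tendsto_pow_atTop_atTop_of_one_lt hρ).eventually_ge_atTop
        ((N:ℝ)/s₀)).exists
      exact ⟨k, (div_le_iff₀ hs₀).1 hk⟩
    calc μ {x : Fin d → ℝ | s₀ < ‖x‖} = μ {x | ρ^k * s₀ < ‖x‖} := (hiter k).symm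
    _ ≤ μ {x | (N:ℝ) < ‖x‖} := measure_mono (fun x hx => lt_of_le_of_lt hk hx)
  have hzero := ge_of_tendsto htail (Eventually.of_forall hle)
  exact hs₀pos (le_antisymm hzero (zero_le))

lemma smul_set_props {β ε : ℝ} (hβ : 0 < β) {B : Set (Fin d → ℝ)} (hB : MeasurableSet B)
    (hε : 0 < ε) (hεB : ∀ x ∈ B, ε ≤ ‖x‖) :
    MeasurableSet (β • B) ∧ (∀ x ∈ β • B, β * ε ≤ ‖x‖) := by
  constructor
  · have : β • B = (fun x : Fin d → ℝ => β⁻¹ • x) ⁻¹' B := by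
      ext x
      rw [Set.mem_smul_set_iff_inv_smul_mem₀ (ne_of_gt hβ), mem_preimage]
    rw [this]
    exact (continuous_const_smul _).measurable hB
  · rintro x ⟨y, hy, rfl⟩
    rw [norm_smul, Real.norm_eq_abs, abs_of_pos hβ]
    exact mul_le_mul_of_nonneg_left (hεB y hy) (le_of_lt hβ)

lemma uniq_scale (μ : Measure (Fin d → ℝ))
    (hfin : ∀ ε : ℝ, 0 < ε → μ {x | ε ≤ ‖x‖} < ⊤)
    {s₀ : ℝ} (hs₀ : 0 < s₀) (hs₀pos : μ {x | s₀ < ‖x‖} ≠ 0)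
    {β β' : ℝ} (hβ : 0 < β) (hβ' : 0 < β') {τ : ENNReal}
    (h1 : ∀ B : Set (Fin d → ℝ), MeasurableSet B → (∃ ε > (0:ℝ), ∀ x ∈ B, ε ≤ ‖x‖) →
      μ (β • B) = τ * μ B)
    (h2 : ∀ B : Set (Fin d → ℝ), MeasurableSet B → (∃ ε > (0:ℝ), ∀ x ∈ B, ε ≤ ‖x‖) →
      μ (β' • B) = τ * μ B) : β = β' := by
  have key : ∀ γ γ' : ℝ, 0 < γ → 0 < γ' → γ < γ' →
      (∀ B : Set (Fin d → ℝ), MeasurableSet B → (∃ ε > (0:ℝ), ∀ x ∈ B, ε ≤ ‖x‖) →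
        μ (γ • B) = τ * μ B) →
      (∀ B : Set (Fin d → ℝ), MeasurableSet B → (∃ ε > (0:ℝ), ∀ x ∈ B, ε ≤ ‖x‖) →
        μ (γ' • B) = τ * μ B) → False := by
    intro γ γ' hγ hγ' hlt hg hg'
    have hρ : 1 < γ' / γ := (one_lt_div hγ).2 hlt
    refine no_fixed_scale μ hfin hs₀ hs₀pos hρ ?_
    intro B hB hBa
    obtain ⟨ε, hε, hεB⟩ := hBa
    have hBi := smul_set_props (inv_pos.2 hγ) hB hε hεB
    have hBa' : ∃ ε' > (0:ℝ), ∀ x ∈ γ⁻¹ • B, ε' ≤ ‖x‖ :=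
      ⟨γ⁻¹ * ε, by positivity, hBi.2⟩
    have e1 : μ (γ • (γ⁻¹ • B)) = τ * μ (γ⁻¹ • B) := hg _ hBi.1 hBa'
    have e2 : μ (γ' • (γ⁻¹ • B)) = τ * μ (γ⁻¹ • B) := hg' _ hBi.1 hBa'
    have e3 : γ • (γ⁻¹ • B) = B := by
      rw [smul_smul, mul_inv_cancel₀ (ne_of_gt hγ), one_smul]
    have e4 : γ' • (γ⁻¹ • B) = (γ'/γ) • B := by
      rw [smul_smul, div_eq_mul_inv]
    rw [e3] at e1
    rw [e4] at e2
    rw [e2, ← e1]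
  rcases lt_trichotomy β β' with h | h | h
  · exact absurd (key β β' hβ hβ' h h1 h2) not_false
  · exact h
  · exact absurd (key β' β hβ' hβ h h2 h1) not_false

lemma tendsto_cone {Ω : Type*} [MeasurableSpace Ω] (P : Measure Ω) [IsProbabilityMeasure P]
    (X : Ω → (Fin d → ℝ)) (a : ℕ → ℝ) (ha_pos : ∀ n, 0 < a n)
    (μ : Measure (Fin d → ℝ))
    (hconv : ∀ B : Set (Fin d → ℝ), MeasurableSet B →
      (∃ ε > (0:ℝ), ∀ x ∈ B, ε ≤ ‖x‖) → μ (frontier B) = 0 →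
      Tendsto (fun n : ℕ => (n : ℝ) * (P {ω | (a n)⁻¹ • X ω ∈ B}).toReal)
        atTop (𝓝 (μ B).toReal))
    {C : Set (Fin d → ℝ)} (hC : ConeGood μ C) {r : ℝ} (hr : 0 < r)
    (hsph : μ {x | ‖x‖ = r} = 0) :
    Tendsto (fun n : ℕ => (n : ℝ) * (P {ω | X ω ∈ C ∧ r * a n < ‖X ω‖}).toReal)
      atTop (𝓝 ((μ (C ∩ {x | r < ‖x‖})).toReal)) := by
  have hmeas : MeasurableSet (C ∩ {x : Fin d → ℝ | r < ‖x‖}) :=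
    (hC.1.measurableSet).inter (measurableSet_lt measurable_const measurable_norm)
  have hbdd : ∃ ε > (0:ℝ), ∀ x ∈ C ∩ {x : Fin d → ℝ | r < ‖x‖}, ε ≤ ‖x‖ :=
    ⟨r, hr, fun x hx => le_of_lt hx.2⟩
  have hfront : μ (frontier (C ∩ {x : Fin d → ℝ | r < ‖x‖})) = 0 := by
    have hsub : frontier (C ∩ {x : Fin d → ℝ | r < ‖x‖}) ⊆
        (frontier C ∩ {x | r ≤ ‖x‖}) ∪ {x | ‖x‖ = r} := by
      intro y hy
      have hy1 : y ∈ closure (C ∩ {x : Fin d → ℝ | r < ‖x‖}) := frontier_subset_closure hy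
      have hyC : y ∈ closure C := closure_mono inter_subset_left hy1
      have hyr : r ≤ ‖y‖ := by
        have h1 : y ∈ closure {x : Fin d → ℝ | r < ‖x‖} := closure_mono inter_subset_right hy1
        have h2 : closure {x : Fin d → ℝ | r < ‖x‖} ⊆ {x | r ≤ ‖x‖} := by
          apply closure_minimal _ (isClosed_le continuous_const continuous_norm)
          intro x hx
          simp only [mem_setOf_eq] at *
          linarith
        exact h2 h1
      have hopen : IsOpen (C ∩ {x : Fin d → ℝ | r < ‖x‖}) :=
        hC.1.inter (isOpen_lt continuous_const continuous_norm)
      have hynot : y ∉ C ∩ {x : Fin d → ℝ | r < ‖x‖} := by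
        intro hmem
        exact hy.2 (by rwa [hopen.interior_eq])
      rcases eq_or_lt_of_le hyr with h | h
      · exact Or.inr h.symm
      · have hyCnot : y ∉ C := fun hc => hynot ⟨hc, h⟩
        exact Or.inl ⟨⟨hyC, by rwa [hC.1.interior_eq]⟩, hyr⟩
    refine le_antisymm ?_ (zero_le)
    calc μ (frontier (C ∩ {x : Fin d → ℝ | r < ‖x‖}))
        ≤ μ ((frontier C ∩ {x | r ≤ ‖x‖}) ∪ {x | ‖x‖ = r}) := measure_mono hsub
    _ ≤ μ (frontier C ∩ {x | r ≤ ‖x‖}) + μ {x | ‖x‖ = r} := measure_union_le _ _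
    _ = 0 := by rw [hC.2.2 r hr, hsph, add_zero]
  have hset : ∀ n : ℕ, {ω | (a n)⁻¹ • X ω ∈ C ∩ {x : Fin d → ℝ | r < ‖x‖}} =
      {ω | X ω ∈ C ∧ r * a n < ‖X ω‖} := by
    intro n
    ext ω
    simp only [mem_setOf_eq, mem_inter_iff]
    have han := ha_pos n
    have hsmul : (a n)⁻¹ • X ω ∈ C ↔ X ω ∈ C := by
      conv_lhs => rw [← hC.2.1 (a n)⁻¹ (inv_pos.2 han)]
      exact smul_mem_smul_set_iff₀ (inv_ne_zero (ne_of_gt han)) C (X ω)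
    have hnrm : (r < ‖(a n)⁻¹ • X ω‖) ↔ r * a n < ‖X ω‖ := by
      rw [norm_inv_smul han, lt_inv_mul_iff₀ han, mul_comm]
    rw [hsmul, hnrm]
  have h := hconv _ hmeas hbdd hfront
  refine h.congr ?_
  intro n
  rw [hset n]

lemma key {Ω : Type*} [MeasurableSpace Ω] (P : Measure Ω) [IsProbabilityMeasure P]
    (X : Ω → (Fin d → ℝ)) (a : ℕ → ℝ) (ha_pos : ∀ n, 0 < a n) (ha_mono : Monotone a)
    (μ : Measure (Fin d → ℝ))
    (hfin : ∀ ε : ℝ, 0 < ε → μ {x | ε ≤ ‖x‖} < ⊤)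
    (hconv : ∀ B : Set (Fin d → ℝ), MeasurableSet B →
      (∃ ε > (0:ℝ), ∀ x ∈ B, ε ≤ ‖x‖) → μ (frontier B) = 0 →
      Tendsto (fun n : ℕ => (n : ℝ) * (P {ω | (a n)⁻¹ • X ω ∈ B}).toReal)
        atTop (𝓝 (μ B).toReal))
    (D : Set ℝ) (hD : D.Countable) (hDs : ∀ s : ℝ, 0 < s → s ∉ D → μ {x | ‖x‖ = s} = 0)
    (s₀ : ℝ) (hs₀ : 0 < s₀) (hs₀D : s₀ ∉ D) (hs₀pos : μ {x | s₀ < ‖x‖} ≠ 0)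
    (t : ℝ) (ht : 1 < t) :
    ∃ β : ℝ, 1 ≤ β ∧ ∀ C, ConeGood μ C → ∀ r : ℝ, 0 < r →
      μ (C ∩ {x | β * r < ‖x‖}) = ENNReal.ofReal t⁻¹ * μ (C ∩ {x | r < ‖x‖}) := by
  have ht0 : (0:ℝ) < t := lt_trans one_pos ht
  have hnormfin : ∀ r : ℝ, 0 < r → μ {x : Fin d → ℝ | r < ‖x‖} ≠ ⊤ := by
    intro r hr
    refine ne_top_of_le_ne_top (hfin r hr).ne (measure_mono ?_)
    intro x hx
    simp only [mem_setOf_eq] at *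
    linarith
  have hconefin : ∀ (C : Set (Fin d → ℝ)) (r : ℝ), 0 < r → μ (C ∩ {x | r < ‖x‖}) ≠ ⊤ :=
    fun C r hr => ne_top_of_le_ne_top (hnormfin r hr) (measure_mono inter_subset_right)
  set mfn : ℕ → ℕ := fun n => ⌊(n:ℝ) * t⌋₊ with hmfn
  have hmge : ∀ n, n ≤ mfn n := fun n =>
    Nat.le_floor (le_mul_of_one_le_right (Nat.cast_nonneg n) (le_of_lt ht))
  have hmtop : Tendsto mfn atTop atTop := tendsto_atTop_mono hmge tendsto_id
  have hratio : Tendsto (fun n : ℕ => (mfn n : ℝ) / n) atTop (𝓝 t) := by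
    have hlow : ∀ᶠ n : ℕ in atTop, t - 1/(n:ℝ) ≤ (mfn n : ℝ)/n := by
      filter_upwards [eventually_gt_atTop 0] with n hn
      have hn' : (0:ℝ) < n := Nat.cast_pos.2 hn
      have h1 : (n:ℝ) * t - 1 < mfn n := Nat.sub_one_lt_floor _
      rw [le_div_iff₀ hn']
      have h3 : (t - 1/(n:ℝ)) * n = (n:ℝ)*t - 1 := by field_simp
      calc (t - 1/(n:ℝ)) * n = (n:ℝ)*t - 1 := h3
      _ ≤ (mfn n : ℝ) := le_of_lt h1
    have hhigh : ∀ᶠ n : ℕ in atTop, (mfn n:ℝ)/n ≤ t := by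
      filter_upwards [eventually_gt_atTop 0] with n hn
      have hn' : (0:ℝ) < n := Nat.cast_pos.2 hn
      rw [div_le_iff₀ hn']
      calc (mfn n : ℝ) ≤ (n:ℝ)*t := Nat.floor_le (by positivity)
      _ = t * n := by ring
    have hlim : Tendsto (fun n : ℕ => t - 1/(n:ℝ)) atTop (𝓝 t) := by
      have h := (tendsto_const_nhds (x := t) (f := (atTop : Filter ℕ))).sub
        tendsto_one_div_atTop_nhds_zero_nat
      simpa using h
    exact tendsto_of_tendsto_of_tendsto_of_le_of_le' hlim tendsto_const_nhds hlow hhigh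
  have hratio' : Tendsto (fun n : ℕ => (n:ℝ) / (mfn n)) atTop (𝓝 t⁻¹) := by
    refine Tendsto.congr' ?_ (hratio.inv₀ (ne_of_gt ht0))
    filter_upwards [eventually_gt_atTop 0] with n hn
    rw [inv_div]
  have La : ∀ (C : Set (Fin d → ℝ)), ConeGood μ C → ∀ r : ℝ, 0 < r → r ∉ D →
      Tendsto (fun n : ℕ => (n:ℝ) * (P {ω | X ω ∈ C ∧ r * a n < ‖X ω‖}).toReal) atTop
        (𝓝 ((μ (C ∩ {x | r < ‖x‖})).toReal)) :=
    fun C hC r hr hrD => tendsto_cone P X a ha_pos μ hconv hC hr (hDs r hr hrD)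
  have Lb : ∀ (C : Set (Fin d → ℝ)), ConeGood μ C → ∀ r : ℝ, 0 < r → r ∉ D →
      Tendsto (fun n : ℕ => (n:ℝ) * (P {ω | X ω ∈ C ∧ r * a (mfn n) < ‖X ω‖}).toReal) atTop
        (𝓝 (t⁻¹ * (μ (C ∩ {x | r < ‖x‖})).toReal)) := by
    intro C hC r hr hrD
    have h1 : Tendsto (fun n : ℕ =>
        (mfn n : ℝ) * (P {ω | X ω ∈ C ∧ r * a (mfn n) < ‖X ω‖}).toReal)
        atTop (𝓝 ((μ (C ∩ {x | r < ‖x‖})).toReal)) := (La C hC r hr hrD).comp hmtop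
    have h2 := hratio'.mul h1
    refine Tendsto.congr' ?_ h2
    filter_upwards [eventually_gt_atTop 0] with n hn
    have hmn : ((mfn n : ℝ)) ≠ 0 :=
      ne_of_gt (Nat.cast_pos.2 (lt_of_lt_of_le hn (hmge n)))
    field_simp
  have Ganti : ∀ (C : Set (Fin d → ℝ)) {y y' : ℝ}, y ≤ y' →
      (P {ω | X ω ∈ C ∧ y' < ‖X ω‖}).toReal ≤ (P {ω | X ω ∈ C ∧ y < ‖X ω‖}).toReal := by
    intro C y y' hyy'
    apply ENNReal.toReal_mono (measure_ne_top P _)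
    apply measure_mono
    intro ω hω
    exact ⟨hω.1, lt_of_le_of_lt hyy' hω.2⟩
  have hU0 := coneGood_univ μ
  set H₀ : ℝ := (μ {x : Fin d → ℝ | s₀ < ‖x‖}).toReal with hH₀def
  have hH₀pos : 0 < H₀ := ENNReal.toReal_pos hs₀pos (hnormfin s₀ hs₀)
  obtain ⟨N, hN⟩ : ∃ N : ℕ, μ {x : Fin d → ℝ | (N:ℝ) < ‖x‖} < ENNReal.ofReal (t⁻¹ * H₀) := by
    have hpos : (0:ENNReal) < ENNReal.ofReal (t⁻¹ * H₀) := ENNReal.ofReal_pos.2 (by positivity)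
    exact ((tendsto_tail μ hfin).eventually_lt_const hpos).exists
  obtain ⟨s₁, hs₁mem, hs₁D⟩ := exists_mem_Ioo_notMem D hD (lt_add_one (max s₀ (N:ℝ)))
  have hs₁ : s₀ < s₁ := lt_of_le_of_lt (le_max_left _ _) hs₁mem.1
  have hs₁pos : 0 < s₁ := lt_trans hs₀ hs₁
  have hs₁N : (N:ℝ) < s₁ := lt_of_le_of_lt (le_max_right _ _) hs₁mem.1
  have hH₁lt : (μ {x : Fin d → ℝ | s₁ < ‖x‖}).toReal < t⁻¹ * H₀ := by
    have hμs₁ : μ {x : Fin d → ℝ | s₁ < ‖x‖} ≤ μ {x | (N:ℝ) < ‖x‖} := by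
      apply measure_mono
      intro x hx
      simp only [mem_setOf_eq] at *
      linarith
    exact ENNReal.toReal_lt_of_lt_ofReal (lt_of_le_of_lt hμs₁ hN)
  set M := s₁ / s₀ with hMdef
  have hupper : ∀ᶠ n : ℕ in atTop, a (mfn n) / a n ≤ M := by
    by_contra hcon
    rw [Filter.not_eventually] at hcon
    have hfreq : ∃ᶠ n in atTop, s₁ * a n < s₀ * a (mfn n) := by
      refine hcon.mono ?_
      intro n hn
      rw [not_le] at hn
      have h1 : M * a n < a (mfn n) := (lt_div_iff₀ (ha_pos n)).1 hn
      have h2 : s₀ * (M * a n) = s₁ * a n := by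
        rw [hMdef]; field_simp
      calc s₁ * a n = s₀ * (M * a n) := h2.symm
      _ < s₀ * a (mfn n) := mul_lt_mul_of_pos_left h1 hs₀
    haveI hlne : (atTop ⊓ Filter.principal {n : ℕ | s₁ * a n < s₀ * a (mfn n)}).NeBot :=
      Filter.frequently_iff_neBot.1 hfreq
    have t1 := (La _ hU0 s₁ hs₁pos hs₁D).mono_left
      (inf_le_left (b := Filter.principal {n : ℕ | s₁ * a n < s₀ * a (mfn n)}))
    have t2 := (Lb _ hU0 s₀ hs₀ hs₀D).mono_left
      (inf_le_left (b := Filter.principal {n : ℕ | s₁ * a n < s₀ * a (mfn n)}))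
    have hle : ∀ᶠ n : ℕ in atTop ⊓ Filter.principal {n : ℕ | s₁ * a n < s₀ * a (mfn n)},
        (n:ℝ) * (P {ω | X ω ∈ {x : Fin d → ℝ | x ≠ 0} ∧ s₀ * a (mfn n) < ‖X ω‖}).toReal ≤
        (n:ℝ) * (P {ω | X ω ∈ {x : Fin d → ℝ | x ≠ 0} ∧ s₁ * a n < ‖X ω‖}).toReal := by
      refine Filter.eventually_inf_principal.2 (Eventually.of_forall ?_)
      intro n hn
      exact mul_le_mul_of_nonneg_left (Ganti _ (le_of_lt hn)) (Nat.cast_nonneg n)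
    have hcontra := le_of_tendsto_of_tendsto t2 t1 hle
    rw [inter_norm_eq hs₀, inter_norm_eq hs₁pos] at hcontra
    rw [← hH₀def] at hcontra
    linarith
  obtain ⟨N₀, hN₀⟩ := Filter.eventually_atTop.1 hupper
  have hx : ∀ k : ℕ, a (mfn (k + N₀)) / a (k + N₀) ∈ Set.Icc 1 M := by
    intro k
    constructor
    · rw [le_div_iff₀ (ha_pos _), one_mul]
      exact ha_mono (hmge (k + N₀))
    · exact hN₀ _ (Nat.le_add_left N₀ k)
  obtain ⟨β, hβmem, φ, hφ, hφlim⟩ := isCompact_Icc.tendsto_subseq hx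
  set ψ : ℕ → ℕ := fun k => φ k + N₀ with hψdef
  have hψmono : StrictMono ψ := fun i j hij => add_lt_add_left (hφ hij) N₀
  have hψtop : Tendsto ψ atTop atTop := hψmono.tendsto_atTop
  have hβlim : Tendsto (fun k => a (mfn (ψ k)) / a (ψ k)) atTop (𝓝 β) := hφlim
  have hβ1 : 1 ≤ β := hβmem.1
  have hβ0 : (0:ℝ) < β := lt_of_lt_of_le one_pos hβ1
  have SandU : ∀ (C : Set (Fin d → ℝ)), ConeGood μ C → ∀ r : ℝ, 0 < r → r ∉ D →
      ∀ v : ℝ, β * r < v → v ∉ D →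
      (μ (C ∩ {x | v < ‖x‖})).toReal ≤ t⁻¹ * (μ (C ∩ {x | r < ‖x‖})).toReal := by
    intro C hC r hr hrD v hv hvD
    have hv0 : (0:ℝ) < v := lt_trans (by positivity) hv
    have A1 := (La C hC v hv0 hvD).comp hψtop
    have A2 := (Lb C hC r hr hrD).comp hψtop
    have hev : ∀ᶠ k in atTop, r * a (mfn (ψ k)) < v * a (ψ k) := by
      have hlt : β < v / r := (lt_div_iff₀ hr).2 hv
      filter_upwards [hβlim.eventually_lt_const hlt] with k hk
      have h1 : a (mfn (ψ k)) < (v/r) * a (ψ k) := by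
        rw [div_lt_iff₀ (ha_pos (ψ k))] at hk
        linarith
      calc r * a (mfn (ψ k)) < r * ((v/r) * a (ψ k)) := mul_lt_mul_of_pos_left h1 hr
      _ = v * a (ψ k) := by field_simp
    have hle : ∀ᶠ k in atTop,
        ((ψ k : ℕ) : ℝ) * (P {ω | X ω ∈ C ∧ v * a (ψ k) < ‖X ω‖}).toReal ≤
        ((ψ k : ℕ) : ℝ) * (P {ω | X ω ∈ C ∧ r * a (mfn (ψ k)) < ‖X ω‖}).toReal := by
      filter_upwards [hev] with k hk
      exact mul_le_mul_of_nonneg_left (Ganti _ (le_of_lt hk)) (Nat.cast_nonneg _)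
    exact le_of_tendsto_of_tendsto A1 A2 hle
  have SandL : ∀ (C : Set (Fin d → ℝ)), ConeGood μ C → ∀ r : ℝ, 0 < r → r ∉ D →
      ∀ u : ℝ, 0 < u → u < β * r → u ∉ D →
      t⁻¹ * (μ (C ∩ {x | r < ‖x‖})).toReal ≤ (μ (C ∩ {x | u < ‖x‖})).toReal := by
    intro C hC r hr hrD u hu0 hu huD
    have A2 := (Lb C hC r hr hrD).comp hψtop
    have A3 := (La C hC u hu0 huD).comp hψtop
    have hev : ∀ᶠ k in atTop, u * a (ψ k) < r * a (mfn (ψ k)) := by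
      have hlt : u / r < β := (div_lt_iff₀ hr).2 (by linarith [hu])
      filter_upwards [hβlim.eventually_const_lt hlt] with k hk
      rw [div_lt_div_iff₀ (by positivity : (0:ℝ) < r) (ha_pos (ψ k))] at hk
      linarith [hk]
    have hle : ∀ᶠ k in atTop,
        ((ψ k : ℕ) : ℝ) * (P {ω | X ω ∈ C ∧ r * a (mfn (ψ k)) < ‖X ω‖}).toReal ≤
        ((ψ k : ℕ) : ℝ) * (P {ω | X ω ∈ C ∧ u * a (ψ k) < ‖X ω‖}).toReal := by
      filter_upwards [hev] with k hk
      exact mul_le_mul_of_nonneg_left (Ganti _ (le_of_lt hk)) (Nat.cast_nonneg _)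
    exact le_of_tendsto_of_tendsto A2 A3 hle
  have Star1 : ∀ (C : Set (Fin d → ℝ)), ConeGood μ C → ∀ r : ℝ, 0 < r → r ∉ D → β * r ∉ D →
      μ (C ∩ {x | β * r < ‖x‖}) = ENNReal.ofReal t⁻¹ * μ (C ∩ {x | r < ‖x‖}) := by
    intro C hC r hr hrD hβrD
    have hβr : (0:ℝ) < β * r := by positivity
    have hupperB : μ (C ∩ {x | β * r < ‖x‖}) ≤ ENNReal.ofReal t⁻¹ * μ (C ∩ {x | r < ‖x‖}) := by
      obtain ⟨v, hvanti, hvD, hvgt, hvlim⟩ := exists_seq_anti D hD (β * r)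
      have hmono : Monotone (fun j => C ∩ {x : Fin d → ℝ | v j < ‖x‖}) := by
        intro i j hij x hx
        exact ⟨hx.1, lt_of_le_of_lt (hvanti.antitone hij) hx.2⟩
      have hUeq : (⋃ j, C ∩ {x : Fin d → ℝ | v j < ‖x‖}) = C ∩ {x | β * r < ‖x‖} := by
        ext x
        simp only [mem_iUnion, mem_inter_iff, mem_setOf_eq]
        constructor
        · rintro ⟨j, hxC, hxv⟩
          exact ⟨hxC, lt_trans (hvgt j) hxv⟩
        · rintro ⟨hxC, hx⟩
          obtain ⟨j, hj⟩ := (hvlim.eventually_lt_const hx).exists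
          exact ⟨j, hxC, hj⟩
      have hU := tendsto_measure_iUnion_atTop (μ := μ) hmono
      rw [hUeq] at hU
      refine le_of_tendsto hU (Eventually.of_forall ?_)
      intro j
      show μ (C ∩ {x | v j < ‖x‖}) ≤ _
      have h1 : (μ (C ∩ {x | v j < ‖x‖})).toReal ≤ t⁻¹ * (μ (C ∩ {x | r < ‖x‖})).toReal :=
        SandU C hC r hr hrD (v j) (hvgt j) (hvD j)
      calc μ (C ∩ {x | v j < ‖x‖})
          = ENNReal.ofReal ((μ (C ∩ {x | v j < ‖x‖})).toReal) :=
            (ENNReal.ofReal_toReal (hconefin _ _ (lt_trans hβr (hvgt j)))).symm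
      _ ≤ ENNReal.ofReal (t⁻¹ * (μ (C ∩ {x | r < ‖x‖})).toReal) := ENNReal.ofReal_le_ofReal h1
      _ = ENNReal.ofReal t⁻¹ * ENNReal.ofReal ((μ (C ∩ {x | r < ‖x‖})).toReal) :=
            ENNReal.ofReal_mul (by positivity)
      _ = ENNReal.ofReal t⁻¹ * μ (C ∩ {x | r < ‖x‖}) := by
            rw [ENNReal.ofReal_toReal (hconefin C r hr)]
    have hlowerB : ENNReal.ofReal t⁻¹ * μ (C ∩ {x | r < ‖x‖}) ≤ μ (C ∩ {x | β * r < ‖x‖}) := by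
      set w : ℕ → ℝ := fun j => β * r * (1 - 1/(j+2:ℝ)) with hwdef
      have hfrac : ∀ j : ℕ, (0:ℝ) < 1/(j+2:ℝ) := fun j => by positivity
      have hfrac1 : ∀ j : ℕ, 1/(j+2:ℝ) < 1 := by
        intro j
        rw [div_lt_one (by positivity)]
        have : (0:ℝ) ≤ (j:ℝ) := Nat.cast_nonneg j
        linarith
      have hw0 : ∀ j, 0 < w j := by
        intro j
        have := hfrac1 j
        have h1 : (0:ℝ) < 1 - 1/(j+2:ℝ) := by linarith
        positivity
      have hwlt : ∀ j, w j < β * r := by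
        intro j
        have := hfrac j
        calc w j < β * r * 1 := by
              apply mul_lt_mul_of_pos_left _ hβr
              linarith
        _ = β * r := mul_one _
      have hwmono : Monotone w := by
        intro i j hij
        have h1 : 1/((j:ℝ)+2) ≤ 1/((i:ℝ)+2) := by
          apply one_div_le_one_div_of_le (by positivity)
          have : (i:ℝ) ≤ (j:ℝ) := Nat.cast_le.2 hij
          linarith
        apply mul_le_mul_of_nonneg_left _ (le_of_lt hβr)
        linarith
      have hwlim : Tendsto w atTop (𝓝 (β * r)) := by
        have hshift : Tendsto (fun j : ℕ => 1/((j:ℝ)+2)) atTop (𝓝 0) := by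
          have h1 := (tendsto_one_div_add_atTop_nhds_zero_nat (𝕜 := ℝ)).comp (tendsto_add_atTop_nat 1)
          refine h1.congr ?_
          intro n
          simp only [Function.comp_apply]
          push_cast
          ring_nf
        have h2 := (tendsto_const_nhds (x := β * r) (f := (atTop : Filter ℕ))).mul
          ((tendsto_const_nhds (x := (1:ℝ)) (f := (atTop : Filter ℕ))).sub hshift)
        have h3 : β * r * (1 - 0) = β * r := by ring
        rw [h3] at h2
        exact h2
      have hanti : Antitone (fun j => C ∩ {x : Fin d → ℝ | w j < ‖x‖}) := by
        intro i j hij x hx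
        exact ⟨hx.1, lt_of_le_of_lt (hwmono hij) hx.2⟩
      have hIeq : (⋂ j, C ∩ {x : Fin d → ℝ | w j < ‖x‖}) = C ∩ {x | β * r ≤ ‖x‖} := by
        ext x
        simp only [mem_iInter, mem_inter_iff, mem_setOf_eq]
        constructor
        · intro hx
          refine ⟨(hx 0).1, ?_⟩
          exact le_of_tendsto hwlim (Eventually.of_forall fun j => le_of_lt (hx j).2)
        · rintro ⟨hxC, hx⟩ j
          exact ⟨hxC, lt_of_lt_of_le (hwlt j) hx⟩
      have hI := tendsto_measure_iInter_atTop (μ := μ)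
        (fun j => ((hC.1.measurableSet).inter
          (measurableSet_lt measurable_const measurable_norm)).nullMeasurableSet)
        hanti ⟨0, hconefin _ _ (hw0 0)⟩
      rw [hIeq] at hI
      have hbound : ∀ j, ENNReal.ofReal t⁻¹ * μ (C ∩ {x | r < ‖x‖}) ≤
          μ (C ∩ {x | w j < ‖x‖}) := by
        intro j
        obtain ⟨u, humem, huD⟩ := exists_mem_Ioo_notMem D hD (hwlt j)
        have hu0 : 0 < u := lt_trans (hw0 j) humem.1
        have h1 := SandL C hC r hr hrD u hu0 humem.2 huD
        calc ENNReal.ofReal t⁻¹ * μ (C ∩ {x | r < ‖x‖})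
            = ENNReal.ofReal (t⁻¹ * (μ (C ∩ {x | r < ‖x‖})).toReal) := by
              rw [ENNReal.ofReal_mul (by positivity), ENNReal.ofReal_toReal (hconefin C r hr)]
        _ ≤ ENNReal.ofReal ((μ (C ∩ {x | u < ‖x‖})).toReal) := ENNReal.ofReal_le_ofReal h1
        _ = μ (C ∩ {x | u < ‖x‖}) := ENNReal.ofReal_toReal (hconefin C u hu0)
        _ ≤ μ (C ∩ {x | w j < ‖x‖}) :=
              measure_mono (fun x hx => ⟨hx.1, lt_trans humem.1 hx.2⟩)
      have h2 : ENNReal.ofReal t⁻¹ * μ (C ∩ {x | r < ‖x‖}) ≤ μ (C ∩ {x | β * r ≤ ‖x‖}) :=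
        ge_of_tendsto hI (Eventually.of_forall hbound)
      refine le_trans h2 ?_
      have hsplit : C ∩ {x : Fin d → ℝ | β * r ≤ ‖x‖} ⊆
          (C ∩ {x | β * r < ‖x‖}) ∪ {x | ‖x‖ = β * r} := by
        rintro x ⟨hxC, hx⟩
        replace hx : β * r ≤ ‖x‖ := hx
        rcases lt_or_eq_of_le hx with h | h
        · exact Or.inl ⟨hxC, h⟩
        · exact Or.inr h.symm
      calc μ (C ∩ {x | β * r ≤ ‖x‖})
          ≤ μ ((C ∩ {x | β * r < ‖x‖}) ∪ {x | ‖x‖ = β * r}) := measure_mono hsplit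
      _ ≤ μ (C ∩ {x | β * r < ‖x‖}) + μ {x | ‖x‖ = β * r} := measure_union_le _ _
      _ = μ (C ∩ {x | β * r < ‖x‖}) := by rw [hDs (β*r) hβr hβrD, add_zero]
    exact le_antisymm hupperB hlowerB
  refine ⟨β, hβ1, ?_⟩
  intro C hC r hr
  set D₂ : Set ℝ := D ∪ (fun s => β⁻¹ * s) '' D with hD₂def
  have hD₂c : D₂.Countable := hD.union (hD.image _)
  have hD₂spec : ∀ s : ℝ, s ∉ D₂ → s ∉ D ∧ β * s ∉ D := by
    intro s hs
    constructor
    · exact fun h => hs (Or.inl h)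
    · intro h
      refine hs (Or.inr ⟨β * s, h, ?_⟩)
      field_simp
  obtain ⟨v, hvanti, hvD₂, hvgt, hvlim⟩ := exists_seq_anti D₂ hD₂c r
  have hveval : ∀ j, μ (C ∩ {x | β * v j < ‖x‖}) =
      ENNReal.ofReal t⁻¹ * μ (C ∩ {x | v j < ‖x‖}) :=
    fun j => Star1 C hC (v j) (lt_trans hr (hvgt j)) (hD₂spec _ (hvD₂ j)).1
      (hD₂spec _ (hvD₂ j)).2
  have hmono1 : Monotone (fun j => C ∩ {x : Fin d → ℝ | β * v j < ‖x‖}) := by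
    intro i j hij x hx
    obtain ⟨hx1, hx2⟩ := hx
    replace hx2 : β * v i < ‖x‖ := hx2
    refine ⟨hx1, ?_⟩
    show β * v j < ‖x‖
    have := mul_le_mul_of_nonneg_left (hvanti.antitone hij) (le_of_lt hβ0)
    linarith
  have hmono2 : Monotone (fun j => C ∩ {x : Fin d → ℝ | v j < ‖x‖}) := by
    intro i j hij x hx
    exact ⟨hx.1, lt_of_le_of_lt (hvanti.antitone hij) hx.2⟩
  have hU1 := tendsto_measure_iUnion_atTop (μ := μ) hmono1
  have hU2 := tendsto_measure_iUnion_atTop (μ := μ) hmono2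
  have hUeq1 : (⋃ j, C ∩ {x : Fin d → ℝ | β * v j < ‖x‖}) = C ∩ {x | β * r < ‖x‖} := by
    ext x
    simp only [mem_iUnion, mem_inter_iff, mem_setOf_eq]
    constructor
    · rintro ⟨j, hxC, hx⟩
      exact ⟨hxC, lt_trans (mul_lt_mul_of_pos_left (hvgt j) hβ0) hx⟩
    · rintro ⟨hxC, hx⟩
      have hblim : Tendsto (fun j => β * v j) atTop (𝓝 (β * r)) := hvlim.const_mul β
      obtain ⟨j, hj⟩ := (hblim.eventually_lt_const hx).exists
      exact ⟨j, hxC, hj⟩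
  have hUeq2 : (⋃ j, C ∩ {x : Fin d → ℝ | v j < ‖x‖}) = C ∩ {x | r < ‖x‖} := by
    ext x
    simp only [mem_iUnion, mem_inter_iff, mem_setOf_eq]
    constructor
    · rintro ⟨j, hxC, hx⟩
      exact ⟨hxC, lt_trans (hvgt j) hx⟩
    · rintro ⟨hxC, hx⟩
      obtain ⟨j, hj⟩ := (hvlim.eventually_lt_const hx).exists
      exact ⟨j, hxC, hj⟩
  rw [hUeq1] at hU1
  rw [hUeq2] at hU2
  have hU2' : Tendsto (fun j => ENNReal.ofReal t⁻¹ * μ (C ∩ {x | v j < ‖x‖})) atTop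
      (𝓝 (ENNReal.ofReal t⁻¹ * μ (C ∩ {x | r < ‖x‖}))) :=
    ENNReal.Tendsto.const_mul hU2 (Or.inr ENNReal.ofReal_ne_top)
  have hU1' := hU1.congr hveval
  exact tendsto_nhds_unique hU1' hU2'

end RegVarProof

open RegVarProof

/-- A nonzero Radon measure `μ` on `ℝ^d \ {0}` arising as the vague limit of
`n · P(aₙ⁻¹ X ∈ ·)` is homogeneous: there is `α > 0` with `μ(tB) = t^{-α} μ(B)` for all
Borel sets `B` bounded away from the origin and all `t > 0`. -/
theorem regvar_limit_measure_homogeneous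
    {d : ℕ} {Ω : Type*} [MeasurableSpace Ω] (P : Measure Ω) [IsProbabilityMeasure P]
    (X : Ω → (Fin d → ℝ)) (hX : Measurable X)
    (a : ℕ → ℝ) (ha_pos : ∀ n, 0 < a n) (ha_mono : Monotone a)
    (ha_top : Tendsto a atTop atTop)
    (μ : Measure (Fin d → ℝ)) (hμ_ne : μ ≠ 0)
    (hμ_radon : ∀ ε : ℝ, 0 < ε → μ {x | ε ≤ ‖x‖} < ⊤)
    (hconv : ∀ B : Set (Fin d → ℝ), MeasurableSet B →
      (∃ ε > (0:ℝ), ∀ x ∈ B, ε ≤ ‖x‖) → μ (frontier B) = 0 →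
      Tendsto (fun n : ℕ => (n : ℝ) * (P {ω | (a n)⁻¹ • X ω ∈ B}).toReal)
        atTop (𝓝 (μ B).toReal)) :
    ∃ α : ℝ, 0 < α ∧ ∀ B : Set (Fin d → ℝ), MeasurableSet B →
      (∃ ε > (0:ℝ), ∀ x ∈ B, ε ≤ ‖x‖) →
      ∀ t : ℝ, 0 < t → μ (t • B) = ENNReal.ofReal (t ^ (-α)) * μ B := by
  classical
  by_cases hcase : ∀ ε : ℝ, 0 < ε → μ {x | ε ≤ ‖x‖} = 0
  · refine ⟨1, one_pos, ?_⟩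
    intro B hB hBa t ht
    obtain ⟨ε, hε, hεB⟩ := hBa
    have hB0 : μ B = 0 := measure_mono_null (fun x hx => hεB x hx) (hcase ε hε)
    have htB0 : μ (t • B) = 0 := by
      refine measure_mono_null ?_ (hcase (t*ε) (by positivity))
      rintro x ⟨y, hy, rfl⟩
      show t * ε ≤ ‖t • y‖
      rw [norm_smul, Real.norm_eq_abs, abs_of_pos ht]
      exact mul_le_mul_of_nonneg_left (hεB y hy) (le_of_lt ht)
    rw [hB0, htB0, mul_zero]
  · push_neg at hcase
    obtain ⟨ε₀, hε₀, hε₀ne⟩ := hcase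
    set D : Set ℝ := {s : ℝ | 0 < s ∧ μ {x | ‖x‖ = s} ≠ 0} with hDdef
    have hD : D.Countable := countable_bad_spheres μ hμ_radon
    have hDs : ∀ s : ℝ, 0 < s → s ∉ D → μ {x | ‖x‖ = s} = 0 := by
      intro s hs hsD
      by_contra h
      exact hsD ⟨hs, h⟩
    obtain ⟨s₀, hs₀mem, hs₀D⟩ := exists_mem_Ioo_notMem D hD hε₀
    have hs₀ : 0 < s₀ := hs₀mem.1
    have hs₀pos : μ {x | s₀ < ‖x‖} ≠ 0 := by
      intro h
      apply hε₀ne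
      refine measure_mono_null ?_ h
      intro x hx
      show s₀ < ‖x‖
      exact lt_of_lt_of_le hs₀mem.2 hx
    have hμB₀top : μ {x : Fin d → ℝ | s₀ < ‖x‖} ≠ ⊤ := by
      refine ne_top_of_le_ne_top (hμ_radon s₀ hs₀).ne (measure_mono ?_)
      intro x hx
      simp only [mem_setOf_eq] at *
      linarith
    have KEY2 : ∀ t : ℝ, 1 ≤ t → ∃ β : ℝ, 0 < β ∧ ∀ B : Set (Fin d → ℝ), MeasurableSet B →
        (∃ ε > (0:ℝ), ∀ x ∈ B, ε ≤ ‖x‖) → μ (β • B) = ENNReal.ofReal t⁻¹ * μ B := by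
      intro t ht
      rcases eq_or_lt_of_le ht with h | h
      · refine ⟨1, one_pos, ?_⟩
        intro B hB hBa
        rw [← h]
        simp
      · obtain ⟨β, hβ1, hβ⟩ := key P X a ha_pos ha_mono μ hμ_radon hconv D hD hDs
          s₀ hs₀ hs₀D hs₀pos t h
        refine ⟨β, lt_of_lt_of_le one_pos hβ1, ?_⟩
        exact fun B hB hBa => ext_from_cones μ hμ_radon (lt_of_lt_of_le one_pos hβ1)
          ENNReal.ofReal_ne_top (fun C hC r hr => hβ C hC r hr) B hB hBa
    have KEYALL : ∀ t : ℝ, 0 < t → ∃ β : ℝ, 0 < β ∧ ∀ B : Set (Fin d → ℝ), MeasurableSet B →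
        (∃ ε > (0:ℝ), ∀ x ∈ B, ε ≤ ‖x‖) → μ (β • B) = ENNReal.ofReal t⁻¹ * μ B := by
      intro t ht
      rcases le_or_gt 1 t with h | h
      · exact KEY2 t h
      · have hinv : 1 ≤ t⁻¹ := by
          nlinarith [mul_inv_cancel₀ (ne_of_gt ht), inv_pos.2 ht]
        obtain ⟨β₁, hβ₁pos, hβ₁⟩ := KEY2 t⁻¹ hinv
        refine ⟨β₁⁻¹, inv_pos.2 hβ₁pos, ?_⟩
        intro B hB hBa
        obtain ⟨ε, hε, hεB⟩ := hBa
        have hprops := smul_set_props (inv_pos.2 hβ₁pos) hB hε hεB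
        have h1 : μ (β₁ • (β₁⁻¹ • B)) = ENNReal.ofReal t⁻¹⁻¹ * μ (β₁⁻¹ • B) :=
          hβ₁ _ hprops.1 ⟨β₁⁻¹ * ε, by positivity, hprops.2⟩
        rw [smul_smul, mul_inv_cancel₀ (ne_of_gt hβ₁pos), one_smul, inv_inv] at h1
        have h2 : ENNReal.ofReal t⁻¹ * ENNReal.ofReal t = 1 := by
          rw [← ENNReal.ofReal_mul (by positivity), inv_mul_cancel₀ (ne_of_gt ht)]
          simp
        calc μ (β₁⁻¹ • B) = 1 * μ (β₁⁻¹ • B) := (one_mul _).symm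
        _ = ENNReal.ofReal t⁻¹ * (ENNReal.ofReal t * μ (β₁⁻¹ • B)) := by
              rw [← mul_assoc, h2]
        _ = ENNReal.ofReal t⁻¹ * μ B := by rw [← h1]
    choose! g hgpos hgrel using KEYALL
    have huniq : ∀ t : ℝ, 0 < t → ∀ β' : ℝ, 0 < β' →
        (∀ B : Set (Fin d → ℝ), MeasurableSet B → (∃ ε > (0:ℝ), ∀ x ∈ B, ε ≤ ‖x‖) →
          μ (β' • B) = ENNReal.ofReal t⁻¹ * μ B) → g t = β' := by
      intro t ht β' hβ' hrel'
      exact uniq_scale μ hμ_radon hs₀ hs₀pos (hgpos t ht) hβ' (hgrel t ht) hrel'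
    have hg1 : g 1 = 1 := by
      apply huniq 1 one_pos 1 one_pos
      intro B hB hBa
      simp
    have hgmul : ∀ s t : ℝ, 0 < s → 0 < t → g (s * t) = g s * g t := by
      intro s t hs ht
      apply huniq (s*t) (by positivity) (g s * g t)
        (mul_pos (hgpos s hs) (hgpos t ht))
      intro B hB hBa
      obtain ⟨ε, hε, hεB⟩ := hBa
      have hBt := smul_set_props (hgpos t ht) hB hε hεB
      have h1 : μ (g t • B) = ENNReal.ofReal t⁻¹ * μ B := hgrel t ht B hB ⟨ε, hε, hεB⟩
      have hgtpos := hgpos t ht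
      have h2 : μ (g s • (g t • B)) = ENNReal.ofReal s⁻¹ * μ (g t • B) :=
        hgrel s hs _ hBt.1 ⟨g t * ε, by positivity, hBt.2⟩
      have h3 : (g s * g t) • B = g s • (g t • B) := (smul_smul _ _ _).symm
      rw [h3, h2, h1, ← mul_assoc, ← ENNReal.ofReal_mul (by positivity), ← mul_inv]
    have hB₀meas : MeasurableSet {x : Fin d → ℝ | s₀ < ‖x‖} :=
      measurableSet_lt measurable_const measurable_norm
    have hB₀bdd : ∃ ε > (0:ℝ), ∀ x ∈ {x : Fin d → ℝ | s₀ < ‖x‖}, ε ≤ ‖x‖ :=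
      ⟨s₀, hs₀, fun x hx => le_of_lt hx⟩
    have hgB₀ : ∀ t : ℝ, 0 < t → μ {x : Fin d → ℝ | g t * s₀ < ‖x‖} =
        ENNReal.ofReal t⁻¹ * μ {x | s₀ < ‖x‖} := by
      intro t ht
      have h := hgrel t ht _ hB₀meas hB₀bdd
      rwa [smul_norm_set (hgpos t ht)] at h
    have hgmono : ∀ s t : ℝ, 0 < s → s ≤ t → g s ≤ g t := by
      intro s t hs hst
      have ht : 0 < t := lt_of_lt_of_le hs hst
      by_contra hlt
      rw [not_le] at hlt
      have hsub : μ {x : Fin d → ℝ | g s * s₀ < ‖x‖} ≤ μ {x | g t * s₀ < ‖x‖} := by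
        apply measure_mono
        intro x hx
        show g t * s₀ < ‖x‖
        have h1 : g t * s₀ < g s * s₀ := mul_lt_mul_of_pos_right hlt hs₀
        exact lt_trans h1 hx
      rw [hgB₀ s hs, hgB₀ t ht] at hsub
      have hle2 : ENNReal.ofReal s⁻¹ ≤ ENNReal.ofReal t⁻¹ :=
        (ENNReal.mul_le_mul_iff_left hs₀pos hμB₀top).1 hsub
      rw [ENNReal.ofReal_le_ofReal_iff (by positivity)] at hle2
      have h2 : t ≤ s := (inv_le_inv₀ hs ht).1 hle2
      have hst' : s = t := le_antisymm hst h2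
      rw [hst'] at hlt
      exact lt_irrefl _ hlt
    have hgt1 : ∀ t : ℝ, 1 < t → 1 < g t := by
      intro t ht
      have ht0 : (0:ℝ) < t := lt_trans one_pos ht
      have h1 : 1 ≤ g t := hg1 ▸ hgmono 1 t one_pos (le_of_lt ht)
      rcases lt_or_eq_of_le h1 with h | h
      · exact h
      · exfalso
        have h2 := hgB₀ t ht0
        rw [← h, one_mul] at h2
        have h3 : (μ {x : Fin d → ℝ | s₀ < ‖x‖}).toReal =
            t⁻¹ * (μ {x : Fin d → ℝ | s₀ < ‖x‖}).toReal := by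
          conv_lhs => rw [h2]
          rw [ENNReal.toReal_mul, ENNReal.toReal_ofReal (by positivity)]
        have h4 : 0 < (μ {x : Fin d → ℝ | s₀ < ‖x‖}).toReal :=
          ENNReal.toReal_pos hs₀pos hμB₀top
        have h5 : t⁻¹ = 1 := by
          have h6 : t⁻¹ * (μ {x : Fin d → ℝ | s₀ < ‖x‖}).toReal =
              1 * (μ {x : Fin d → ℝ | s₀ < ‖x‖}).toReal := by
            rw [one_mul]; linarith
          exact mul_right_cancel₀ (ne_of_gt h4) h6
        have h7 : t = 1 := by
          rw [inv_eq_one] at h5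
          exact h5
        linarith
    set φ : ℝ → ℝ := fun x => Real.log (g (Real.exp x)) with hφdef
    have hφadd : ∀ x y : ℝ, φ (x + y) = φ x + φ y := by
      intro x y
      simp only [hφdef]
      rw [Real.exp_add, hgmul _ _ (Real.exp_pos x) (Real.exp_pos y),
        Real.log_mul (ne_of_gt (hgpos _ (Real.exp_pos x))) (ne_of_gt (hgpos _ (Real.exp_pos y)))]
    have hφmono : Monotone φ := by
      intro x y hxy
      simp only [hφdef]
      rw [Real.log_le_log_iff (hgpos _ (Real.exp_pos x)) (hgpos _ (Real.exp_pos y))]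
      exact hgmono _ _ (Real.exp_pos x) (Real.exp_le_exp.2 hxy)
    set γ := φ 1 with hγdef
    have hγpos : 0 < γ := by
      rw [hγdef]
      simp only [hφdef]
      apply Real.log_pos
      apply hgt1
      exact Real.one_lt_exp_iff.2 one_pos
    have hφrat : ∀ (q : ℚ) (x : ℝ), φ ((q:ℝ) * x) = (q:ℝ) * φ x := by
      intro q x
      have h := map_ratCast_smul (AddMonoidHom.mk' φ (fun a b => hφadd a b)) ℝ ℝ q x
      simpa [smul_eq_mul] using h
    have hφq : ∀ q : ℚ, φ (q:ℝ) = (q:ℝ) * γ := by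
      intro q
      have h := hφrat q 1
      rw [mul_one] at h
      rw [h, hγdef]
    have hφlin : ∀ x : ℝ, φ x = γ * x := by
      intro x
      by_contra hne
      rcases lt_or_gt_of_ne hne with h | h
      · obtain ⟨q, hq1, hq2⟩ := exists_rat_btwn
          (show φ x / γ < x from (div_lt_iff₀' hγpos).2 h)
        have h1 : φ (q:ℝ) ≤ φ x := hφmono (le_of_lt hq2)
        rw [hφq q] at h1
        have h2 : φ x < (q:ℝ) * γ := by
          rw [div_lt_iff₀ hγpos] at hq1
          linarith
        linarith
      · obtain ⟨q, hq1, hq2⟩ := exists_rat_btwn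
          (show x < φ x / γ from (lt_div_iff₀' hγpos).2 h)
        have h1 : φ x ≤ φ (q:ℝ) := hφmono (le_of_lt hq1)
        rw [hφq q] at h1
        have h2 : (q:ℝ) * γ < φ x := by
          rw [lt_div_iff₀ hγpos] at hq2
          linarith
        linarith
    have hgpow : ∀ u : ℝ, 0 < u → g u = u ^ γ := by
      intro u hu
      have h1 : φ (Real.log u) = Real.log (g u) := by
        simp only [hφdef]
        rw [Real.exp_log hu]
      have h2 : Real.log (g u) = γ * Real.log u := by
        rw [← h1, hφlin]
      have h3 : g u = Real.exp (γ * Real.log u) := by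
        rw [← h2, Real.exp_log (hgpos u hu)]
      rw [h3, Real.rpow_def_of_pos hu]
      ring_nf
    refine ⟨γ⁻¹, inv_pos.2 hγpos, ?_⟩
    intro B hB hBa t ht
    set s := t ^ γ⁻¹ with hsdef
    have hspos : 0 < s := Real.rpow_pos_of_pos ht _
    have hgs : g s = t := by
      rw [hgpow s hspos, hsdef, ← Real.rpow_mul (le_of_lt ht),
        inv_mul_cancel₀ (ne_of_gt hγpos), Real.rpow_one]
    have hthis := hgrel s hspos B hB hBa
    rw [hgs] at hthis
    rw [hthis]
    congr 1
    rw [Real.rpow_neg (le_of_lt ht)]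
end

section
/- Let π be a probability measure on a set M of d×d matrices, and suppose there are measurable κ : M → [1,∞) and ρ : M → (0,∞) with ‖e^{As}‖ ≤ κ(A)e^{−ρ(A)s} for all s ≥ 0, π-almost surely. Fix α > 0 and assume ∫_M κ(A)^α/ρ(A) π(dA) < ∞ and ∫_M κ(A)^α π(dA) < ∞. Define f_δ(A,s) = sup{‖e^{A(t₂−s)}𝟙_{[0,∞)}(t₂−s) − e^{A(t₁−s)}𝟙_{[0,∞)}(t₁−s)‖ : 0 ≤ t₁ ≤ t₂ ≤ 1, t₂−t₁ ≤ δ, s ∉ (t₁,t₂]}. Then ∫_M ∫_ℝ f_δ(A,s)^α ds π(dA) < ∞ for every δ ∈ (0,1). -/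
open MeasureTheory Filter Set Topology

/-- The supOU kernel `f(A,u) = e^{Au} 𝟙_{[0,∞)}(u)` built from the operator exponential. -/
noncomputable def supOUKernel {d : ℕ}
    (A : EuclideanSpace ℝ (Fin d) →L[ℝ] EuclideanSpace ℝ (Fin d)) (u : ℝ) :
    EuclideanSpace ℝ (Fin d) →L[ℝ] EuclideanSpace ℝ (Fin d) :=
  if 0 ≤ u then NormedSpace.exp (u • A) else 0

/-- The oscillation function
`f_δ(A,s) = sup{‖f(A,t₂−s) − f(A,t₁−s)‖ : 0 ≤ t₁ ≤ t₂ ≤ 1, t₂−t₁ ≤ δ, s ∉ (t₁,t₂]}`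
of the supOU kernel (with `sSup ∅ = 0`). -/
noncomputable def supOUOscillation {d : ℕ}
    (A : EuclideanSpace ℝ (Fin d) →L[ℝ] EuclideanSpace ℝ (Fin d)) (δ s : ℝ) : ℝ :=
  sSup {r : ℝ | ∃ t₁ t₂ : ℝ, 0 ≤ t₁ ∧ t₁ ≤ t₂ ∧ t₂ ≤ 1 ∧ t₂ - t₁ ≤ δ ∧
    s ∉ Set.Ioc t₁ t₂ ∧ r = ‖supOUKernel A (t₂ - s) - supOUKernel A (t₁ - s)‖}

/-- Auxiliary: `∫_{-∞}^0 e^{cs} ds = 1/c` for `c > 0`, in lintegral form. -/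
lemma supOU_aux_lintegral_exp (c : ℝ) (hc : 0 < c) :
    ∫⁻ s in Iic (0:ℝ), ENNReal.ofReal (Real.exp (c * s)) = ENNReal.ofReal (1/c) := by
  have hmp : MeasurePreserving (fun x : ℝ => -x) volume volume :=
    Measure.measurePreserving_neg _
  have hemb : MeasurableEmbedding (fun x : ℝ => -x) :=
    (Homeomorph.neg ℝ).measurableEmbedding
  have h0 : ∫⁻ s in Iic (0:ℝ), ENNReal.ofReal (Real.exp (c * s))
      = ∫⁻ s in Iio (0:ℝ), ENNReal.ofReal (Real.exp (c * s)) :=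
    (setLIntegral_congr Iio_ae_eq_Iic.symm)
  have h1 : (fun x : ℝ => -x) ⁻¹' (Iio (0:ℝ)) = Ioi 0 := by ext x; simp
  have h2 := hmp.setLIntegral_comp_preimage_emb hemb
      (fun s => ENNReal.ofReal (Real.exp (c * s))) (Iio 0)
  rw [h1] at h2
  have h3 : ∫⁻ s in Ioi (0:ℝ), ENNReal.ofReal (Real.exp (c * -s))
      = ENNReal.ofReal (∫ s in Ioi (0:ℝ), Real.exp (-c * s)) := by
    simp_rw [show ∀ s : ℝ, c * -s = -c * s from fun s => by ring]
    rw [← ofReal_integral_eq_lintegral_ofReal (exp_neg_integrableOn_Ioi 0 hc)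
      (Filter.Eventually.of_forall fun x => (Real.exp_pos _).le)]
  have h4 : ∫ s in Ioi (0:ℝ), Real.exp (-c * s) = 1/c := by
    have := integral_comp_mul_left_Ioi (fun y => Real.exp (-y)) 0 hc
    simp only [mul_zero, neg_mul] at this ⊢
    rw [this, integral_exp_neg_Ioi_zero, smul_eq_mul, mul_one, one_div]
  rw [h0, ← h2, h3, h4]

/-- Auxiliary: the pointwise bound on the oscillation function. -/
lemma supOU_aux_osc_bound {d : ℕ}
    (A : EuclideanSpace ℝ (Fin d) →L[ℝ] EuclideanSpace ℝ (Fin d))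
    {κA ρA : ℝ} (hκ : 1 ≤ κA) (hρ : 0 < ρA)
    (hb : ∀ s : ℝ, 0 ≤ s → ‖NormedSpace.exp (s • A)‖ ≤ κA * Real.exp (-ρA * s))
    {δ : ℝ} (hδ : 0 < δ) (s : ℝ) :
    0 ≤ supOUOscillation A δ s ∧
      supOUOscillation A δ s ≤
        if 1 < s then 0 else 2 * κA * Real.exp (ρA * min s 0) := by
  have hκ0 : (0:ℝ) < κA := lt_of_lt_of_le one_pos hκ
  set B : ℝ := if 1 < s then 0 else 2 * κA * Real.exp (ρA * min s 0) with hB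
  have hB0 : 0 ≤ B := by
    rw [hB]; split
    · exact le_refl 0
    · positivity
  have ub : ∀ r ∈ {r : ℝ | ∃ t₁ t₂ : ℝ, 0 ≤ t₁ ∧ t₁ ≤ t₂ ∧ t₂ ≤ 1 ∧ t₂ - t₁ ≤ δ ∧
      s ∉ Set.Ioc t₁ t₂ ∧ r = ‖supOUKernel A (t₂ - s) - supOUKernel A (t₁ - s)‖}, r ≤ B := by
    rintro r ⟨t₁, t₂, ht0, h12, h21, hdd, hs, rfl⟩
    by_cases hst : s ≤ t₁
    · have hs1 : ¬ 1 < s := not_lt.mpr (hst.trans (h12.trans h21))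
      rw [hB, if_neg hs1]
      have key : ∀ t : ℝ, 0 ≤ t → s ≤ t →
          ‖supOUKernel A (t - s)‖ ≤ κA * Real.exp (ρA * min s 0) := by
        intro t ht0' hst'
        have hu : 0 ≤ t - s := sub_nonneg.mpr hst'
        rw [supOUKernel, if_pos hu]
        refine (hb _ hu).trans ?_
        have harg : -ρA * (t - s) ≤ ρA * min s 0 := by
          have h1 : -(t - s) ≤ min s 0 := le_min (by linarith) (by linarith)
          calc -ρA * (t - s) = ρA * (-(t - s)) := by ring
            _ ≤ ρA * min s 0 := mul_le_mul_of_nonneg_left h1 hρ.le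
        exact mul_le_mul_of_nonneg_left (Real.exp_le_exp.mpr harg) hκ0.le
      calc ‖supOUKernel A (t₂ - s) - supOUKernel A (t₁ - s)‖
          ≤ ‖supOUKernel A (t₂ - s)‖ + ‖supOUKernel A (t₁ - s)‖ := norm_sub_le _ _
        _ ≤ κA * Real.exp (ρA * min s 0) + κA * Real.exp (ρA * min s 0) :=
            add_le_add (key t₂ (ht0.trans h12) (hst.trans h12)) (key t₁ ht0 hst)
        _ = 2 * κA * Real.exp (ρA * min s 0) := by ring
    · push_neg at hst
      have ht2 : t₂ < s := by
        by_contra h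
        exact hs ⟨hst, not_lt.mp h⟩
      have e2 : supOUKernel A (t₂ - s) = 0 := if_neg (by linarith)
      have e1 : supOUKernel A (t₁ - s) = 0 := if_neg (by linarith [h12.trans_lt ht2])
      rw [e1, e2, sub_zero, norm_zero]
      exact hB0
  have mem0 : (0:ℝ) ∈ {r : ℝ | ∃ t₁ t₂ : ℝ, 0 ≤ t₁ ∧ t₁ ≤ t₂ ∧ t₂ ≤ 1 ∧ t₂ - t₁ ≤ δ ∧
      s ∉ Set.Ioc t₁ t₂ ∧ r = ‖supOUKernel A (t₂ - s) - supOUKernel A (t₁ - s)‖} :=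
    ⟨0, 0, le_refl _, le_refl _, zero_le_one, by simpa using hδ.le, by simp,
      by rw [sub_self, norm_zero]⟩
  exact ⟨le_csSup ⟨B, ub⟩ mem0, Real.sSup_le ub hB0⟩

/-- Proposition 5.3: under the exponential bound `‖e^{As}‖ ≤ κ(A)e^{−ρ(A)s}`
(π-a.s., for all `s ≥ 0`) and the integrability conditions `∫ κ^α/ρ dπ < ∞`,
`∫ κ^α dπ < ∞`, the oscillation `f_δ` of the supOU kernel satisfies
`∫_M ∫_ℝ f_δ(A,s)^α ds π(dA) < ∞` for every `δ ∈ (0,1)`. -/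
theorem supOUOscillation_mem_Lalpha
    {d : ℕ}
    [MeasurableSpace (EuclideanSpace ℝ (Fin d) →L[ℝ] EuclideanSpace ℝ (Fin d))]
    [BorelSpace (EuclideanSpace ℝ (Fin d) →L[ℝ] EuclideanSpace ℝ (Fin d))]
    (π : Measure (EuclideanSpace ℝ (Fin d) →L[ℝ] EuclideanSpace ℝ (Fin d)))
    [IsProbabilityMeasure π]
    (κ ρ : (EuclideanSpace ℝ (Fin d) →L[ℝ] EuclideanSpace ℝ (Fin d)) → ℝ)
    (hκ_meas : Measurable κ) (hρ_meas : Measurable ρ)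
    (hκ1 : ∀ A, 1 ≤ κ A) (hρ0 : ∀ A, 0 < ρ A)
    (hbound : ∀ᵐ A ∂π, ∀ s : ℝ, 0 ≤ s →
      ‖NormedSpace.exp (s • A)‖ ≤ κ A * Real.exp (-ρ A * s))
    (α : ℝ) (hα : 0 < α)
    (hint1 : ∫⁻ A, ENNReal.ofReal (κ A ^ α / ρ A) ∂π < ⊤)
    (hint2 : ∫⁻ A, ENNReal.ofReal (κ A ^ α) ∂π < ⊤) :
    ∀ δ : ℝ, δ ∈ Set.Ioo (0:ℝ) 1 →
      ∫⁻ A, (∫⁻ s, ENNReal.ofReal (supOUOscillation A δ s ^ α)) ∂π < ⊤ := by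
  intro δ hδ
  set G : (EuclideanSpace ℝ (Fin d) →L[ℝ] EuclideanSpace ℝ (Fin d)) → ENNReal :=
    fun A => ENNReal.ofReal (2 ^ α / α) * ENNReal.ofReal (κ A ^ α / ρ A)
      + ENNReal.ofReal (2 ^ α) * ENNReal.ofReal (κ A ^ α) with hG
  have key : ∀ᵐ A ∂π, (∫⁻ s, ENNReal.ofReal (supOUOscillation A δ s ^ α)) ≤ G A := by
    filter_upwards [hbound] with A hA
    have hK1 : 1 ≤ κ A := hκ1 A
    have hK0 : (0:ℝ) < κ A := lt_of_lt_of_le one_pos hK1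
    have hR0 : (0:ℝ) < ρ A := hρ0 A
    have hαR : (0:ℝ) < α * ρ A := mul_pos hα hR0
    have h2K : (0:ℝ) ≤ 2 * κ A := by linarith
    have h2Kα : (0:ℝ) ≤ (2 * κ A) ^ α := Real.rpow_nonneg h2K α
    -- pointwise bound on the integrand
    have hpt : ∀ s : ℝ, ENNReal.ofReal (supOUOscillation A δ s ^ α) ≤
        (Iic (0:ℝ)).indicator
          (fun s => ENNReal.ofReal ((2 * κ A) ^ α * Real.exp (α * ρ A * s))) s
        + (Ioc (0:ℝ) 1).indicator (fun _ => ENNReal.ofReal ((2 * κ A) ^ α)) s := by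
      intro s
      obtain ⟨h0f, hfB⟩ := supOU_aux_osc_bound A hK1 hR0 hA hδ.1 s
      rcases lt_or_ge 1 s with hs1 | hs1
      · rw [if_pos hs1] at hfB
        have hf0 : supOUOscillation A δ s = 0 := le_antisymm hfB h0f
        rw [hf0, Real.zero_rpow hα.ne', ENNReal.ofReal_zero]
        exact zero_le
      · rw [if_neg (not_lt.mpr hs1)] at hfB
        rcases le_or_gt s 0 with hs0 | hs0
        · rw [Set.indicator_of_mem (mem_Iic.mpr hs0),
            Set.indicator_of_notMem (fun h => absurd h.1 (not_lt.mpr hs0)), add_zero]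
          apply ENNReal.ofReal_le_ofReal
          rw [min_eq_left hs0] at hfB
          calc supOUOscillation A δ s ^ α
              ≤ (2 * κ A * Real.exp (ρ A * s)) ^ α := Real.rpow_le_rpow h0f hfB hα.le
            _ = (2 * κ A) ^ α * Real.exp (ρ A * s) ^ α :=
                Real.mul_rpow h2K (Real.exp_nonneg _)
            _ = (2 * κ A) ^ α * Real.exp (α * ρ A * s) := by
                rw [← Real.exp_mul]; ring_nf
        · rw [Set.indicator_of_notMem (notMem_Iic.mpr hs0),
            Set.indicator_of_mem (mem_Ioc.mpr ⟨hs0, hs1⟩), zero_add]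
          apply ENNReal.ofReal_le_ofReal
          rw [min_eq_right hs0.le, mul_zero, Real.exp_zero, mul_one] at hfB
          exact Real.rpow_le_rpow h0f hfB hα.le
    have hmeas1 : Measurable ((Iic (0:ℝ)).indicator
        (fun s => ENNReal.ofReal ((2 * κ A) ^ α * Real.exp (α * ρ A * s)))) := by
      apply Measurable.indicator _ measurableSet_Iic
      exact ENNReal.measurable_ofReal.comp
        (measurable_const.mul (Real.measurable_exp.comp (measurable_id.const_mul _)))
    calc (∫⁻ s, ENNReal.ofReal (supOUOscillation A δ s ^ α))
        ≤ ∫⁻ s, ((Iic (0:ℝ)).indicator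
            (fun s => ENNReal.ofReal ((2 * κ A) ^ α * Real.exp (α * ρ A * s))) s
          + (Ioc (0:ℝ) 1).indicator (fun _ => ENNReal.ofReal ((2 * κ A) ^ α)) s) :=
          lintegral_mono hpt
      _ = (∫⁻ s, (Iic (0:ℝ)).indicator
            (fun s => ENNReal.ofReal ((2 * κ A) ^ α * Real.exp (α * ρ A * s))) s)
          + ∫⁻ s, (Ioc (0:ℝ) 1).indicator (fun _ => ENNReal.ofReal ((2 * κ A) ^ α)) s :=
          lintegral_add_left hmeas1 _
      _ = ENNReal.ofReal ((2 * κ A) ^ α) * ENNReal.ofReal (1 / (α * ρ A))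
          + ENNReal.ofReal ((2 * κ A) ^ α) * volume (Ioc (0:ℝ) 1) := by
          rw [lintegral_indicator measurableSet_Iic, lintegral_indicator_const measurableSet_Ioc]
          congr 1
          simp_rw [ENNReal.ofReal_mul h2Kα]
          rw [lintegral_const_mul' _ _ ENNReal.ofReal_ne_top,
            supOU_aux_lintegral_exp (α * ρ A) hαR]
      _ ≤ G A := by
          rw [Real.volume_Ioc, sub_zero, ENNReal.ofReal_one, mul_one]
          apply add_le_add
          · rw [← ENNReal.ofReal_mul h2Kα, ← ENNReal.ofReal_mul (by positivity)]
            apply ENNReal.ofReal_le_ofReal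
            apply le_of_eq
            rw [Real.mul_rpow (by norm_num) hK0.le, div_mul_div_comm, mul_one_div]
          · rw [← ENNReal.ofReal_mul (by positivity)]
            apply ENNReal.ofReal_le_ofReal
            rw [Real.mul_rpow (by norm_num) hK0.le]
  have hmG1 : Measurable fun A => ENNReal.ofReal (2 ^ α / α) * ENNReal.ofReal (κ A ^ α / ρ A) := by
    exact (ENNReal.measurable_ofReal.comp ((hκ_meas.pow measurable_const).div hρ_meas)).const_mul _
  calc ∫⁻ A, (∫⁻ s, ENNReal.ofReal (supOUOscillation A δ s ^ α)) ∂π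
      ≤ ∫⁻ A, G A ∂π := lintegral_mono_ae key
    _ = (∫⁻ A, ENNReal.ofReal (2 ^ α / α) * ENNReal.ofReal (κ A ^ α / ρ A) ∂π)
        + ∫⁻ A, ENNReal.ofReal (2 ^ α) * ENNReal.ofReal (κ A ^ α) ∂π := by
        rw [hG, lintegral_add_left hmG1]
    _ = ENNReal.ofReal (2 ^ α / α) * (∫⁻ A, ENNReal.ofReal (κ A ^ α / ρ A) ∂π)
        + ENNReal.ofReal (2 ^ α) * ∫⁻ A, ENNReal.ofReal (κ A ^ α) ∂π := by
        rw [lintegral_const_mul' _ _ ENNReal.ofReal_ne_top,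
          lintegral_const_mul' _ _ ENNReal.ofReal_ne_top]
    _ < ⊤ := ENNReal.add_lt_top.mpr
        ⟨ENNReal.mul_lt_top ENNReal.ofReal_lt_top hint1,
          ENNReal.mul_lt_top ENNReal.ofReal_lt_top hint2⟩
end
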